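/- arXiv:2012.01215 — 8 statements merged into one kernel-verified Lean document; each statement's English description precedes it below -/
import Mathlib

section
/- δ̃(n) > 0 if and only if there exists x ∈ ℝ_{++}^n with F̃(x) = 0; moreover, F̃ has at most one zero in ℝ_{++}^n. -/
/-!
Degenerate stochastic Lotka–Volterra food chains:
`δ̃(n) > 0` iff `F̃` has a (necessarily unique) positive zero.
-/

/-- The set `A_a^b` of involutive permutations of `ℕ` that fix every point outside
`{a, …, b}` and move every point by at most one (products of disjoint transpositions
of the form `(i i+1)` supported in `{a, …, b}`). -/
def Aset (a b : ℕ) : Set (Equiv.Perm ℕ) :=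
  {σ | σ * σ = 1 ∧ (∀ j, j ∉ Finset.Icc a b → σ j = j) ∧
    ∀ j, |((σ j : ℤ)) - (j : ℤ)| ≤ 1}

/-- `S_a^b = Σ_{σ ∈ A_a^b} Π_{j=a}^{b} ã_{j,σ(j)}` (equal to `1` when `a > b`). -/
noncomputable def Ssum (ta : ℕ → ℕ → ℝ) (a b : ℕ) : ℝ :=
  ∑ᶠ σ ∈ Aset a b, ∏ j ∈ Finset.Icc a b, ta j (σ j)

/-- `δ̃(m) = ã_{10} Π_{j=2}^{m} ã_{j,j−1} − Σ_{k=2}^{m} ã_{k0} (Π_{l=k+1}^{m} ã_{l,l−1}) S_1^{k−1}`. -/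
noncomputable def deltaT (ta : ℕ → ℕ → ℝ) (m : ℕ) : ℝ :=
  ta 1 0 * ∏ j ∈ Finset.Icc 2 m, ta j (j - 1) -
    ∑ k ∈ Finset.Icc 2 m, ta k 0 * (∏ l ∈ Finset.Icc (k + 1) m, ta l (l - 1)) * Ssum ta 1 (k - 1)

/-- The drift field `F̃` of the Lotka–Volterra food chain (components indexed by `1 ≤ i ≤ n`). -/
def Ft (n : ℕ) (ta : ℕ → ℕ → ℝ) (x : ℕ → ℝ) (i : ℕ) : ℝ :=
  if i = 1 then ta 1 0 - ta 1 1 * x 1 - ta 1 2 * x 2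
  else if i = n then -ta n 0 + ta n (n - 1) * x (n - 1) - ta n n * x n
  else -ta i 0 + ta i (i - 1) * x (i - 1) - ta i i * x i - ta i (i + 1) * x (i + 1)

lemma one_mem_Aset (a b : ℕ) : (1 : Equiv.Perm ℕ) ∈ Aset a b :=
  ⟨one_mul 1, fun j _ => rfl, fun j => by simp⟩

lemma inv_apply_of_mem {a b : ℕ} {σ : Equiv.Perm ℕ} (hσ : σ ∈ Aset a b) (j : ℕ) :
    σ (σ j) = j := by
  have := congrArg (fun τ : Equiv.Perm ℕ => τ j) hσ.1
  simpa [Equiv.Perm.mul_apply] using this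

lemma Aset_of_lt {a b : ℕ} (h : b < a) : Aset a b = {1} := by
  ext σ
  constructor
  · rintro ⟨-, hfix, -⟩
    have : σ = 1 := Equiv.ext fun j => hfix j (by simp [Finset.mem_Icc]; omega)
    simpa using this
  · rintro rfl; exact one_mem_Aset a b

lemma Aset_diag (a : ℕ) : Aset a a = {1} := by
  ext σ
  constructor
  · rintro ⟨hinv, hfix, hmove⟩
    have hσa : σ a = a := by
      by_contra hne
      have h1 : σ (σ a) = σ a := hfix (σ a) (by simp [Finset.mem_Icc]; omega)
      have h2 : σ (σ a) = a := inv_apply_of_mem ⟨hinv, hfix, hmove⟩ a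
      exact hne (h1.symm.trans h2)
    have : σ = 1 := Equiv.ext fun j => by
      rcases eq_or_ne j a with rfl | hj
      · exact hσa
      · exact hfix j (by simp [Finset.mem_Icc]; omega)
    simpa using this
  · rintro rfl; exact one_mem_Aset a a

lemma fix_or_swap {a b : ℕ} (ha : 1 ≤ a) (hab : a ≤ b) {σ : Equiv.Perm ℕ}
    (hσ : σ ∈ Aset a b) : σ b = b ∨ (a + 1 ≤ b ∧ σ b = b - 1) := by
  obtain ⟨hinv, hfix, hmove⟩ := hσ
  have hb := abs_le.mp (hmove b)
  obtain ⟨hb1, hb2⟩ := hb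
  have hcases : σ b = b ∨ σ b = b + 1 ∨ (1 ≤ b ∧ σ b = b - 1) := by omega
  rcases hcases with h | h | ⟨hb1', h⟩
  · exact Or.inl h
  · exfalso
    have h1 : σ (b + 1) = b + 1 := hfix (b + 1) (by simp [Finset.mem_Icc])
    have h2 : σ (σ b) = b := inv_apply_of_mem ⟨hinv, hfix, hmove⟩ b
    rw [h, h1] at h2; omega
  · by_cases hb3 : a + 1 ≤ b
    · exact Or.inr ⟨hb3, h⟩
    · exfalso
      have h1 : σ (b - 1) = b - 1 := hfix (b - 1) (by simp [Finset.mem_Icc]; omega)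
      have h2 : σ (σ b) = b := inv_apply_of_mem ⟨hinv, hfix, hmove⟩ b
      rw [h, h1] at h2; omega

lemma Aset_fix_subset {a b : ℕ} (hb : 1 ≤ b) {σ : Equiv.Perm ℕ}
    (hσ : σ ∈ Aset a b) (hfb : σ b = b) : σ ∈ Aset a (b - 1) := by
  obtain ⟨hinv, hfix, hmove⟩ := hσ
  refine ⟨hinv, fun j hj => ?_, hmove⟩
  rcases eq_or_ne j b with rfl | hne
  · exact hfb
  · exact hfix j (by simp [Finset.mem_Icc] at hj ⊢; omega)

lemma Aset_mono {a b : ℕ} (hb : 1 ≤ b) {σ : Equiv.Perm ℕ}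
    (hσ : σ ∈ Aset a (b - 1)) : σ ∈ Aset a b ∧ σ b = b := by
  obtain ⟨hinv, hfix, hmove⟩ := hσ
  have hfb : σ b = b := hfix b (by simp [Finset.mem_Icc]; omega)
  exact ⟨⟨hinv, fun j hj => hfix j (by simp [Finset.mem_Icc] at hj ⊢; omega), hmove⟩, hfb⟩

lemma swap_to_lower {a d : ℕ} {σ : Equiv.Perm ℕ} (hσ : σ ∈ Aset a (d + 2))
    (h : σ (d + 2) = d + 1) : σ * Equiv.swap (d + 1) (d + 2) ∈ Aset a d := by
  obtain ⟨hinv, hfix, hmove⟩ := hσ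
  have hinv' := inv_apply_of_mem ⟨hinv, hfix, hmove⟩
  have hσd1 : σ (d + 1) = d + 2 := by have := hinv' (d + 2); rw [h] at this; exact this
  have hne : ∀ j, j ≠ d + 1 → j ≠ d + 2 → σ j ≠ d + 1 ∧ σ j ≠ d + 2 := by
    intro j h1 h2
    constructor
    · intro hc; have := hinv' j; rw [hc, hσd1] at this; exact h2 this.symm
    · intro hc; have := hinv' j; rw [hc, h] at this; exact h1 this.symm
  set π := σ * Equiv.swap (d + 1) (d + 2) with hπ
  have key : ∀ j, π j = if j = d + 1 then d + 1 else if j = d + 2 then d + 2 else σ j := by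
    intro j
    rcases eq_or_ne j (d + 1) with rfl | h1
    · simp [hπ, Equiv.Perm.mul_apply, Equiv.swap_apply_left, h]
    rcases eq_or_ne j (d + 2) with rfl | h2
    · simp [hπ, Equiv.Perm.mul_apply, Equiv.swap_apply_right, hσd1, h1]
    · simp [hπ, Equiv.Perm.mul_apply, Equiv.swap_apply_of_ne_of_ne h1 h2, h1, h2]
  have key2 : ∀ j, π (π j) = j := by
    intro j
    rcases eq_or_ne j (d + 1) with rfl | h1
    · have e : π (d + 1) = d + 1 := by rw [key, if_pos rfl]
      rw [e, e]
    rcases eq_or_ne j (d + 2) with rfl | h2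
    · have e : π (d + 2) = d + 2 := by rw [key, if_neg h1, if_pos rfl]
      rw [e, e]
    · obtain ⟨k1, k2⟩ := hne j h1 h2
      have e : π j = σ j := by rw [key, if_neg h1, if_neg h2]
      have e2 : π (σ j) = σ (σ j) := by rw [key, if_neg k1, if_neg k2]
      rw [e, e2, hinv' j]
  refine ⟨Equiv.ext fun j => by rw [Equiv.Perm.mul_apply, key2 j, Equiv.Perm.one_apply],
    fun j hj => ?_, fun j => ?_⟩
  · rw [key]
    rcases eq_or_ne j (d + 1) with rfl | h1
    · simp
    rcases eq_or_ne j (d + 2) with rfl | h2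
    · simp [h1]
    · simp only [h1, h2, if_false]
      exact hfix j (by simp [Finset.mem_Icc] at hj ⊢; omega)
  · rw [key]
    rcases eq_or_ne j (d + 1) with rfl | h1
    · simp
    rcases eq_or_ne j (d + 2) with rfl | h2
    · simp [h1]
    · simpa [h1, h2] using hmove j

lemma swap_to_upper {a d : ℕ} (ha : 1 ≤ a) (had : a ≤ d + 1) {τ : Equiv.Perm ℕ}
    (hτ : τ ∈ Aset a d) :
    τ * Equiv.swap (d + 1) (d + 2) ∈ Aset a (d + 2) ∧
      (τ * Equiv.swap (d + 1) (d + 2)) (d + 2) = d + 1 := by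
  obtain ⟨hinv, hfix, hmove⟩ := hτ
  have hinv' := inv_apply_of_mem ⟨hinv, hfix, hmove⟩
  have hτ1 : τ (d + 1) = d + 1 := hfix _ (by simp [Finset.mem_Icc])
  have hτ2 : τ (d + 2) = d + 2 := hfix _ (by simp [Finset.mem_Icc])
  have hne : ∀ j, j ≠ d + 1 → j ≠ d + 2 → τ j ≠ d + 1 ∧ τ j ≠ d + 2 := by
    intro j h1 h2
    constructor
    · intro hc; have := hinv' j; rw [hc, hτ1] at this; exact h1 this.symm
    · intro hc; have := hinv' j; rw [hc, hτ2] at this; exact h2 this.symm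
  set π := τ * Equiv.swap (d + 1) (d + 2) with hπ
  have key : ∀ j, π j = if j = d + 1 then d + 2 else if j = d + 2 then d + 1 else τ j := by
    intro j
    rcases eq_or_ne j (d + 1) with rfl | h1
    · simp [hπ, Equiv.Perm.mul_apply, Equiv.swap_apply_left, hτ2]
    rcases eq_or_ne j (d + 2) with rfl | h2
    · simp [hπ, Equiv.Perm.mul_apply, Equiv.swap_apply_right, hτ1, h1]
    · simp [hπ, Equiv.Perm.mul_apply, Equiv.swap_apply_of_ne_of_ne h1 h2, h1, h2]
  have e1 : π (d + 1) = d + 2 := by rw [key, if_pos rfl]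
  have e2 : π (d + 2) = d + 1 := by rw [key, if_neg (by omega), if_pos rfl]
  have key2 : ∀ j, π (π j) = j := by
    intro j
    rcases eq_or_ne j (d + 1) with rfl | h1
    · rw [e1, e2]
    rcases eq_or_ne j (d + 2) with rfl | h2
    · rw [e2, e1]
    · obtain ⟨k1, k2⟩ := hne j h1 h2
      have e : π j = τ j := by rw [key, if_neg h1, if_neg h2]
      have e3 : π (τ j) = τ (τ j) := by rw [key, if_neg k1, if_neg k2]
      rw [e, e3, hinv' j]
  refine ⟨⟨Equiv.ext fun j => by rw [Equiv.Perm.mul_apply, key2 j, Equiv.Perm.one_apply],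
    fun j hj => ?_, fun j => ?_⟩, e2⟩
  · rw [key]
    have h1 : j ≠ d + 1 := by intro hc; subst hc; simp [Finset.mem_Icc] at hj; omega
    have h2 : j ≠ d + 2 := by intro hc; subst hc; simp [Finset.mem_Icc] at hj; omega
    simp only [h1, h2, if_false]
    exact hfix j (by simp [Finset.mem_Icc] at hj ⊢; omega)
  · rw [key]
    rcases eq_or_ne j (d + 1) with rfl | h1
    · simp
    rcases eq_or_ne j (d + 2) with rfl | h2
    · simp [h1]
    · simpa [h1, h2] using hmove j

lemma Aset_decomp {a d : ℕ} (ha : 1 ≤ a) (had : a ≤ d + 1) :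
    Aset a (d + 2) =
      Aset a (d + 1) ∪ (· * Equiv.swap (d + 1) (d + 2)) '' Aset a d := by
  ext σ
  constructor
  · intro hσ
    rcases fix_or_swap ha (by omega) hσ with hfb | ⟨-, hfb⟩
    · exact Or.inl (Aset_fix_subset (by omega) hσ hfb)
    · refine Or.inr ⟨σ * Equiv.swap (d + 1) (d + 2), swap_to_lower hσ hfb, ?_⟩
      show (σ * Equiv.swap (d + 1) (d + 2)) * Equiv.swap (d + 1) (d + 2) = σ
      rw [mul_assoc, Equiv.swap_mul_self, mul_one]
  · intro hσ
    rcases hσ with hσ | ⟨τ, hτ, rfl⟩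
    · exact (Aset_mono (by omega) hσ).1
    · exact (swap_to_upper ha had hτ).1

lemma Aset_finite (a : ℕ) (ha : 1 ≤ a) : ∀ b, (Aset a b).Finite := by
  intro b
  induction b using Nat.strong_induction_on with
  | _ b ih =>
    rcases lt_or_ge b a with h | h
    · rw [Aset_of_lt h]; exact Set.finite_singleton 1
    rcases eq_or_lt_of_le h with rfl | hab
    · rw [Aset_diag]; exact Set.finite_singleton 1
    obtain ⟨d, rfl⟩ : ∃ d, b = d + 2 := ⟨b - 2, by omega⟩
    rw [Aset_decomp ha (by omega)]
    exact ((ih (d + 1) (by omega)).union ((ih d (by omega)).image _))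

lemma ssum_of_lt (ta : ℕ → ℕ → ℝ) {a b : ℕ} (h : b < a) : Ssum ta a b = 1 := by
  rw [Ssum, Aset_of_lt h, finsum_mem_singleton, Finset.Icc_eq_empty (by omega),
    Finset.prod_empty]

lemma ssum_diag (ta : ℕ → ℕ → ℝ) (a : ℕ) : Ssum ta a a = ta a a := by
  rw [Ssum, Aset_diag, finsum_mem_singleton, Finset.Icc_self, Finset.prod_singleton]
  simp

lemma ssum_rec (ta : ℕ → ℕ → ℝ) {a d : ℕ} (ha : 1 ≤ a) (had : a ≤ d + 1) :
    Ssum ta a (d + 2) =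
      ta (d + 2) (d + 2) * Ssum ta a (d + 1)
        + ta (d + 1) (d + 2) * ta (d + 2) (d + 1) * Ssum ta a d := by
  have hf1 := Aset_finite a ha (d + 1)
  have hf2 := Aset_finite a ha d
  have hinj : (Aset a d).InjOn (· * Equiv.swap (d + 1) (d + 2)) :=
    fun τ1 _ τ2 _ h => mul_right_cancel h
  have hdisj : Disjoint (Aset a (d + 1)) ((· * Equiv.swap (d + 1) (d + 2)) '' Aset a d) := by
    rw [Set.disjoint_left]
    rintro σ hσ ⟨τ, hτ, rfl⟩
    have h1 : (τ * Equiv.swap (d + 1) (d + 2)) (d + 2) = d + 1 :=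
      (swap_to_upper ha had hτ).2
    have h2 : (τ * Equiv.swap (d + 1) (d + 2)) (d + 2) = d + 2 :=
      (Aset_mono (b := d + 2) (by omega) hσ).2
    omega
  have eA : ∑ᶠ σ ∈ Aset a (d + 1), ∏ j ∈ Finset.Icc a (d + 2), ta j (σ j)
      = ta (d + 2) (d + 2) * Ssum ta a (d + 1) := by
    rw [Ssum, finsum_mem_eq_finite_toFinset_sum _ hf1, finsum_mem_eq_finite_toFinset_sum _ hf1,
      Finset.mul_sum]
    refine Finset.sum_congr rfl fun σ hσ => ?_
    rw [Set.Finite.mem_toFinset] at hσ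
    have hfixb := (Aset_mono (a := a) (b := d + 2) (by omega) hσ).2
    rw [Finset.prod_Icc_succ_top (by omega : a ≤ d + 1 + 1), hfixb]
    ring
  have eB : ∑ᶠ σ ∈ (· * Equiv.swap (d + 1) (d + 2)) '' Aset a d,
        ∏ j ∈ Finset.Icc a (d + 2), ta j (σ j)
      = ta (d + 1) (d + 2) * ta (d + 2) (d + 1) * Ssum ta a d := by
    rw [finsum_mem_image hinj, Ssum, finsum_mem_eq_finite_toFinset_sum _ hf2,
      finsum_mem_eq_finite_toFinset_sum _ hf2, Finset.mul_sum]
    refine Finset.sum_congr rfl fun τ hτ => ?_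
    rw [Set.Finite.mem_toFinset] at hτ
    have ev2 : (τ * Equiv.swap (d + 1) (d + 2)) (d + 2) = d + 1 := by
      show τ (Equiv.swap (d + 1) (d + 2) (d + 2)) = d + 1
      rw [Equiv.swap_apply_right]
      exact hτ.2.1 _ (by simp [Finset.mem_Icc])
    have ev1 : (τ * Equiv.swap (d + 1) (d + 2)) (d + 1) = d + 2 := by
      show τ (Equiv.swap (d + 1) (d + 2) (d + 1)) = d + 2
      rw [Equiv.swap_apply_left]
      exact hτ.2.1 _ (by simp [Finset.mem_Icc])
    rw [Finset.prod_Icc_succ_top (by omega : a ≤ d + 1 + 1),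
      Finset.prod_Icc_succ_top (by omega : a ≤ d + 1), ev2, ev1]
    have : ∏ j ∈ Finset.Icc a d, ta j ((τ * Equiv.swap (d + 1) (d + 2)) j)
        = ∏ j ∈ Finset.Icc a d, ta j (τ j) := by
      refine Finset.prod_congr rfl fun j hj => ?_
      rw [Finset.mem_Icc] at hj
      show ta j (τ (Equiv.swap (d + 1) (d + 2) j)) = _
      rw [Equiv.swap_apply_of_ne_of_ne (by omega) (by omega)]
    rw [this]
    ring
  rw [Ssum, Aset_decomp ha had, finsum_mem_union hdisj hf1 (hf2.image _), eA, eB]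

lemma ssum_rec' (ta : ℕ → ℕ → ℝ) {m : ℕ} (hm : 2 ≤ m) :
    Ssum ta 1 m = ta m m * Ssum ta 1 (m - 1)
      + ta (m - 1) m * ta m (m - 1) * Ssum ta 1 (m - 2) := by
  obtain ⟨d, rfl⟩ : ∃ d, m = d + 2 := ⟨m - 2, by omega⟩
  have := ssum_rec ta (a := 1) (d := d) le_rfl (by omega)
  simpa using this

lemma master (ta : ℕ → ℕ → ℝ) (x : ℕ → ℝ) :
    ∀ m, 2 ≤ m →
      (∀ k, 2 ≤ k → k ≤ m →
        ta k (k - 1) * x (k - 1) = ta k 0 + ta k k * x k + ta k (k + 1) * x (k + 1)) →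
      (∏ l ∈ Finset.Icc 2 m, ta l (l - 1)) * (ta 1 1 * x 1 + ta 1 2 * x 2)
        = (∑ k ∈ Finset.Icc 2 m, ta k 0 * (∏ l ∈ Finset.Icc (k + 1) m, ta l (l - 1)) *
            Ssum ta 1 (k - 1))
          + Ssum ta 1 m * x m + Ssum ta 1 (m - 1) * ta m (m + 1) * x (m + 1) := by
  intro m hm
  induction m, hm using Nat.le_induction with
  | base =>
    intro heq
    have h2 := heq 2 le_rfl le_rfl
    have e0 : Ssum ta 1 0 = 1 := ssum_of_lt ta (by omega)
    have e1 : Ssum ta 1 1 = ta 1 1 := ssum_diag ta 1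
    have e2 : Ssum ta 1 2 = ta 2 2 * ta 1 1 + ta 1 2 * ta 2 1 := by
      rw [ssum_rec' ta le_rfl]
      norm_num [e0, e1]
    norm_num at h2 ⊢
    rw [e1, e2]
    linear_combination ta 1 1 * h2
  | succ m hm ih =>
    intro heq
    have ih' := ih fun k hk hkm => heq k hk (by omega)
    have hK : ta (m + 1) m * x m
        = ta (m + 1) 0 + ta (m + 1) (m + 1) * x (m + 1) + ta (m + 1) (m + 2) * x (m + 2) := by
      have := heq (m + 1) (by omega) le_rfl
      simpa using this
    have hprod : (∏ l ∈ Finset.Icc 2 (m + 1), ta l (l - 1))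
        = (∏ l ∈ Finset.Icc 2 m, ta l (l - 1)) * ta (m + 1) m := by
      rw [Finset.prod_Icc_succ_top (by omega : 2 ≤ m + 1)]
      norm_num
    have hSrec : Ssum ta 1 (m + 1) = ta (m + 1) (m + 1) * Ssum ta 1 m
        + ta m (m + 1) * ta (m + 1) m * Ssum ta 1 (m - 1) := by
      have := ssum_rec' ta (m := m + 1) (by omega)
      simpa [show m + 1 - 2 = m - 1 by omega] using this
    have hsum : (∑ k ∈ Finset.Icc 2 (m + 1),
          ta k 0 * (∏ l ∈ Finset.Icc (k + 1) (m + 1), ta l (l - 1)) * Ssum ta 1 (k - 1))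
        = (∑ k ∈ Finset.Icc 2 m,
            ta k 0 * (∏ l ∈ Finset.Icc (k + 1) m, ta l (l - 1)) * Ssum ta 1 (k - 1))
              * ta (m + 1) m
          + ta (m + 1) 0 * Ssum ta 1 m := by
      rw [Finset.sum_Icc_succ_top (by omega : 2 ≤ m + 1)]
      rw [Finset.Icc_eq_empty (by omega : ¬(m + 1 + 1 : ℕ) ≤ m + 1), Finset.prod_empty,
        Finset.sum_mul]
      have hcg : ∀ k ∈ Finset.Icc 2 m,
          ta k 0 * (∏ l ∈ Finset.Icc (k + 1) (m + 1), ta l (l - 1)) * Ssum ta 1 (k - 1)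
            = ta k 0 * (∏ l ∈ Finset.Icc (k + 1) m, ta l (l - 1)) * Ssum ta 1 (k - 1)
                * ta (m + 1) m := by
        intro k hk
        rw [Finset.mem_Icc] at hk
        rw [Finset.prod_Icc_succ_top (by omega : k + 1 ≤ m + 1),
          show m + 1 - 1 = m from rfl]
        ring
      rw [Finset.sum_congr rfl hcg, show m + 1 - 1 = m from rfl]
      ring
    rw [hprod, hSrec, hsum]
    simp only [Nat.add_sub_cancel]
    linear_combination ta (m + 1) m * ih' + Ssum ta 1 m * hK

noncomputable def rec2 (a b : ℝ) (F : ℕ → ℝ → ℝ → ℝ) : ℕ → ℝ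
  | 0 => a
  | 1 => b
  | (j + 2) => F j (rec2 a b F (j + 1)) (rec2 a b F j)


/-- `δ̃(n) > 0` iff `F̃` has a zero in `ℝ_{++}^n`; moreover `F̃` has at most one zero
in `ℝ_{++}^n`. -/
theorem stmt0 (n : ℕ) (hn : 2 ≤ n) (ta : ℕ → ℕ → ℝ)
    (hi0 : ∀ i, 2 ≤ i → i ≤ n → 0 < ta i 0)
    (h11 : 0 < ta 1 1)
    (hii : ∀ i, 2 ≤ i → i ≤ n → 0 ≤ ta i i)
    (hlow : ∀ i, 2 ≤ i → i ≤ n → 0 < ta i (i - 1))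
    (hup : ∀ i, 1 ≤ i → i ≤ n - 1 → 0 < ta i (i + 1)) :
    (0 < deltaT ta n ↔
      ∃ x : ℕ → ℝ, (∀ i, 1 ≤ i → i ≤ n → 0 < x i) ∧
        ∀ i, 1 ≤ i → i ≤ n → Ft n ta x i = 0) ∧
    (∀ x y : ℕ → ℝ,
      (∀ i, 1 ≤ i → i ≤ n → 0 < x i) → (∀ i, 1 ≤ i → i ≤ n → Ft n ta x i = 0) →
      (∀ i, 1 ≤ i → i ≤ n → 0 < y i) → (∀ i, 1 ≤ i → i ≤ n → Ft n ta y i = 0) →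
      ∀ i, 1 ≤ i → i ≤ n → x i = y i) := by
  -- positivity of the S-sums
  have hS : ∀ m, m ≤ n → 0 < Ssum ta 1 m := by
    intro m
    induction m using Nat.strong_induction_on with
    | _ m ih =>
      intro hmn
      rcases Nat.lt_or_ge m 2 with h2 | h2
      · interval_cases m
        · rw [ssum_of_lt ta (by omega)]; norm_num
        · rw [ssum_diag]; exact h11
      · rw [ssum_rec' ta h2]
        have t1 : 0 ≤ ta m m * Ssum ta 1 (m - 1) :=
          mul_nonneg (hii m h2 hmn) (ih (m - 1) (by omega) (by omega)).le
        have t2 : 0 < ta (m - 1) m * ta m (m - 1) * Ssum ta 1 (m - 2) := by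
          have hu := hup (m - 1) (by omega) (by omega)
          have hl := hlow m h2 hmn
          have hs2 := ih (m - 2) (by omega) (by omega)
          have : ta (m - 1) (m - 1 + 1) = ta (m - 1) m := by
            congr 1; omega
          rw [this] at hu
          exact mul_pos (mul_pos hu hl) hs2
        linarith
  have hSn := hS n le_rfl
  have hP : 0 < ∏ l ∈ Finset.Icc 2 n, ta l (l - 1) := by
    refine Finset.prod_pos fun l hl => ?_
    rw [Finset.mem_Icc] at hl
    exact hlow l hl.1 hl.2
  -- key identity: any solution of all equations satisfies deltaT = S_1^n * x n
  have key : ∀ x : ℕ → ℝ, (∀ i, 1 ≤ i → i ≤ n → Ft n ta x i = 0) →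
      deltaT ta n = Ssum ta 1 n * x n := by
    intro x hx
    set x' : ℕ → ℝ := Function.update x (n + 1) 0 with hx'
    have hx'eq : ∀ j, j ≤ n → x' j = x j := fun j hj =>
      Function.update_of_ne (by omega) _ _
    have hx'top : x' (n + 1) = 0 := Function.update_self _ _ _
    have heq : ∀ k, 2 ≤ k → k ≤ n →
        ta k (k - 1) * x' (k - 1) = ta k 0 + ta k k * x' k + ta k (k + 1) * x' (k + 1) := by
      intro k h2 hkn
      rcases eq_or_lt_of_le hkn with rfl | hlt
      · have hFt := hx k (by omega) le_rfl
        simp only [Ft] at hFt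
        rw [if_neg (by omega : ¬ k = 1), if_pos trivial] at hFt
        rw [hx'eq (k - 1) (by omega), hx'eq k le_rfl, hx'top]
        linarith
      · have hFt := hx k (by omega) (by omega)
        simp only [Ft, if_neg (by omega : ¬ k = 1), if_neg (by omega : ¬ k = n)] at hFt
        rw [hx'eq (k - 1) (by omega), hx'eq k (by omega), hx'eq (k + 1) (by omega)]
        linarith
    have hm := master ta x' n hn heq
    have h1 := hx 1 le_rfl (by omega)
    simp only [Ft] at h1
    rw [if_pos trivial] at h1
    rw [hx'top, hx'eq 1 (by omega), hx'eq 2 (by omega), hx'eq n le_rfl] at hm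
    rw [deltaT]
    linear_combination hm + (∏ l ∈ Finset.Icc 2 n, ta l (l - 1)) * h1
  constructor
  · constructor
    · -- existence from positivity of deltaT
      intro hδ
      set t := deltaT ta n / Ssum ta 1 n with ht
      have htpos : 0 < t := div_pos hδ hSn
      set w : ℕ → ℝ := rec2 0 t (fun j u v =>
        (ta (n - j) 0 + ta (n - j) (n - j) * u + ta (n - j) (n - j + 1) * v) /
          ta (n - j) (n - j - 1)) with hwdef
      have hw0 : w 0 = 0 := rfl
      have hw1 : w 1 = t := rfl
      have hwrec : ∀ j, w (j + 2) =
          (ta (n - j) 0 + ta (n - j) (n - j) * w (j + 1) + ta (n - j) (n - j + 1) * w j) /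
            ta (n - j) (n - j - 1) := fun j => rfl
      have hwpos : ∀ j, 1 ≤ j → j ≤ n → 0 < w j := by
        intro j
        induction j using Nat.strong_induction_on with
        | _ j ih =>
          intro h1 hjn
          rcases Nat.lt_or_ge j 2 with hj2 | hj2
          · have : j = 1 := by omega
            rw [this, hw1]; exact htpos
          · obtain ⟨j', rfl⟩ : ∃ j', j = j' + 2 := ⟨j - 2, by omega⟩
            rw [hwrec j']
            have hi2 : 2 ≤ n - j' := by omega
            have hin : n - j' ≤ n := by omega
            apply div_pos _ (hlow (n - j') hi2 hin)
            have ha : 0 < ta (n - j') 0 := hi0 (n - j') hi2 hin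
            have hb : 0 ≤ ta (n - j') (n - j') * w (j' + 1) :=
              mul_nonneg (hii (n - j') hi2 hin) (ih (j' + 1) (by omega) (by omega) (by omega)).le
            have hc : 0 ≤ ta (n - j') (n - j' + 1) * w j' := by
              rcases Nat.eq_zero_or_pos j' with rfl | hj'
              · rw [hw0, mul_zero]
              · exact mul_nonneg (hup (n - j') (by omega) (by omega)).le
                  (ih j' (by omega) (by omega) (by omega)).le
            linarith
      set x : ℕ → ℝ := fun i => w (n + 1 - i) with hxdef
      have hxw : ∀ i, x i = w (n + 1 - i) := fun i => rfl
      have hkey : ∀ k, 2 ≤ k → k ≤ n →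
          ta k (k - 1) * x (k - 1) = ta k 0 + ta k k * x k + ta k (k + 1) * x (k + 1) := by
        intro k h2 hk
        have hrec := hwrec (n - k)
        have e0 : n - (n - k) = k := by omega
        rw [e0] at hrec
        have e3 : n - k + 2 = n + 1 - (k - 1) := by omega
        have e4 : n - k + 1 = n + 1 - k := by omega
        have e5 : n - k = n + 1 - (k + 1) := by omega
        rw [hxw (k - 1), hxw k, hxw (k + 1), ← e3, ← e4, ← e5, hrec]
        rw [mul_comm, div_mul_cancel₀ _ (ne_of_gt (hlow k h2 hk))]
      have hxn : x n = t := by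
        rw [hxw n, show n + 1 - n = 1 by omega, hw1]
      have hxn1 : x (n + 1) = 0 := by
        rw [hxw (n + 1), show n + 1 - (n + 1) = 0 by omega, hw0]
      refine ⟨x, fun i h1 hi => hwpos (n + 1 - i) (by omega) (by omega), fun i h1 hi => ?_⟩
      rcases eq_or_ne i 1 with rfl | hne1
      · simp only [Ft]
        rw [if_pos trivial]
        have hm := master ta x n hn hkey
        rw [hxn, hxn1] at hm
        have hst : Ssum ta 1 n * t = deltaT ta n := by
          rw [ht, mul_comm, div_mul_cancel₀ _ (ne_of_gt hSn)]
        have hgoal : (∏ l ∈ Finset.Icc 2 n, ta l (l - 1)) * (ta 1 1 * x 1 + ta 1 2 * x 2)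
            = (∏ l ∈ Finset.Icc 2 n, ta l (l - 1)) * ta 1 0 := by
          rw [hm, hst, deltaT]; ring
        have := mul_left_cancel₀ (ne_of_gt hP) hgoal
        linarith
      rcases eq_or_ne i n with rfl | hnen
      · simp only [Ft]
        rw [if_neg hne1, if_pos trivial]
        have hk := hkey i hn le_rfl
        rw [hxn1] at hk
        linarith
      · simp only [Ft, if_neg hne1, if_neg hnen]
        have hk := hkey i (by omega) hi
        linarith
    · -- positivity of deltaT from existence
      rintro ⟨x, hxp, hxe⟩
      rw [key x hxe]
      exact mul_pos hSn (hxp n (by omega) le_rfl)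
  · -- uniqueness
    intro x y hxp hxe hyp hye
    have hxyn : x n = y n := by
      have hx := key x hxe
      have hy := key y hye
      exact mul_left_cancel₀ (ne_of_gt hSn) (hx ▸ hy)
    have down : ∀ j i, i + j = n → 1 ≤ i → x i = y i := by
      intro j
      induction j using Nat.strong_induction_on with
      | _ j ih =>
        intro i hij h1
        rcases Nat.eq_zero_or_pos j with rfl | hj
        · rw [show i = n by omega]; exact hxyn
        rcases eq_or_lt_of_le (show i + 1 ≤ n by omega) with he | hlt
        · -- i + 1 = n
          have ex := hxe n (by omega) le_rfl
          have ey := hye n (by omega) le_rfl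
          simp only [Ft] at ex ey
          rw [if_neg (by omega : ¬ n = 1), if_pos trivial] at ex
          rw [if_neg (by omega : ¬ n = 1), if_pos trivial] at ey
          rw [hxyn] at ex
          have hl := hlow n (by omega) le_rfl
          have : ta n (n - 1) * x (n - 1) = ta n (n - 1) * y (n - 1) := by linarith
          have := mul_left_cancel₀ (ne_of_gt hl) this
          rw [show i = n - 1 by omega]
          exact this
        · -- i + 1 < n
          have ex := hxe (i + 1) (by omega) (by omega)
          have ey := hye (i + 1) (by omega) (by omega)
          simp only [Ft, if_neg (by omega : ¬ i + 1 = 1), if_neg (by omega : ¬ i + 1 = n),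
            Nat.add_sub_cancel] at ex ey
          have e1 : x (i + 1) = y (i + 1) := ih (j - 1) (by omega) (i + 1) (by omega) (by omega)
          have e2 : x (i + 1 + 1) = y (i + 1 + 1) :=
            ih (j - 2) (by omega) (i + 1 + 1) (by omega) (by omega)
          rw [e1, e2] at ex
          have hl := hlow (i + 1) (by omega) (by omega)
          rw [show i + 1 - 1 = i by omega] at hl
          have hic : ta (i + 1) i * x i = ta (i + 1) i * y i := by linarith
          exact mul_left_cancel₀ (ne_of_gt hl) hic
    intro i h1 hi
    exact down (n - i) i (by omega) h1
end

section
/- If δ̃(n) > 0 then δ̃(n−1) > 0. -/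
/-- If `δ̃(n) > 0` then `δ̃(n−1) > 0`. -/
theorem stmt5 (n : ℕ) (hn : 2 ≤ n) (ta : ℕ → ℕ → ℝ)
    (hi0 : ∀ i, 2 ≤ i → i ≤ n → 0 < ta i 0)
    (h11 : 0 < ta 1 1)
    (hii : ∀ i, 2 ≤ i → i ≤ n → 0 ≤ ta i i)
    (hlow : ∀ i, 2 ≤ i → i ≤ n → 0 < ta i (i - 1))
    (hup : ∀ i, 1 ≤ i → i ≤ n - 1 → 0 < ta i (i + 1)) :
    0 < deltaT ta n → 0 < deltaT ta (n - 1) := by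
  intro hpos
  obtain ⟨m, rfl⟩ : ∃ m, n = m + 1 := ⟨n - 1, by omega⟩
  have hm : 1 ≤ m := by omega
  have hS : 0 ≤ Ssum ta 1 m := by
    rw [Ssum, finsum_mem_def]
    refine finsum_nonneg fun σ => Set.indicator_nonneg (fun σ hσ => ?_) σ
    obtain ⟨hinv, hfix, hdist⟩ := hσ
    refine Finset.prod_nonneg fun j hj => ?_
    rw [Finset.mem_Icc] at hj
    have h0 : σ 0 = 0 := hfix 0 (by simp)
    have hne : σ j ≠ 0 := fun h => by
      have := σ.injective (h.trans h0.symm); omega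
    have hd := hdist j
    rw [abs_le] at hd
    have hcase : (σ j = j - 1 ∧ 2 ≤ j) ∨ σ j = j ∨ σ j = j + 1 := by omega
    rcases hcase with ⟨h, h2⟩ | h | h
    · rw [h]; exact (hlow j h2 (by omega)).le
    · rw [h]
      rcases Nat.eq_or_lt_of_le hj.1 with h1 | h1
      · rw [← h1]; exact h11.le
      · exact hii j h1 (by omega)
    · rw [h]; exact (hup j hj.1 (by omega)).le
  have key : deltaT ta (m + 1) =
      ta (m + 1) m * deltaT ta m - ta (m + 1) 0 * Ssum ta 1 m := by
    have hstep : ∀ k ∈ Finset.Icc 2 m,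
        ta k 0 * (∏ l ∈ Finset.Icc (k + 1) (m + 1), ta l (l - 1)) * Ssum ta 1 (k - 1)
        = ta (m + 1) m * (ta k 0 * (∏ l ∈ Finset.Icc (k + 1) m, ta l (l - 1)) *
            Ssum ta 1 (k - 1)) := by
      intro k hk
      rw [Finset.mem_Icc] at hk
      rw [Finset.prod_Icc_succ_top (by omega : k + 1 ≤ m + 1)]
      simp only [Nat.add_sub_cancel]
      ring
    unfold deltaT
    rw [Finset.prod_Icc_succ_top (by omega : 2 ≤ m + 1),
      Finset.sum_Icc_succ_top (by omega : 2 ≤ m + 1),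
      Finset.sum_congr rfl hstep, ← Finset.mul_sum,
      show Finset.Icc (m + 1 + 1) (m + 1) = ∅ from Finset.Icc_eq_empty (by omega),
      Finset.prod_empty]
    simp only [Nat.add_sub_cancel]
    ring
  rw [key] at hpos
  have hc : 0 < ta (m + 1) m := by
    have := hlow (m + 1) (by omega) le_rfl
    simpa using this
  have hA : 0 ≤ ta (m + 1) 0 * Ssum ta 1 m :=
    mul_nonneg (hi0 (m + 1) (by omega) le_rfl).le hS
  simp only [Nat.add_sub_cancel]
  nlinarith
end

section
/- If δ̃(n−1) ≤ 0 then δ̃(n) < 0. -/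
/-- explicit involution -/
def sigF (m : ℕ) : ℕ → ℕ := fun j =>
  if j < 1 + m % 2 ∨ m < j then j
  else if (j - (1 + m % 2)) % 2 = 0 then j + 1 else j - 1

lemma sigF_invol (m : ℕ) : Function.Involutive (sigF m) := by
  intro j
  unfold sigF
  split_ifs <;> omega

lemma aset_finite (a b : ℕ) : (Aset a b).Finite := by
  have hbound : ∀ σ ∈ Aset a b, ∀ j : ℕ, j ∈ Finset.Icc a b → σ j < b + 2 := by
    rintro σ ⟨h1, h2, h3⟩ j hj
    have := h3 j
    rw [abs_le] at this
    simp [Finset.mem_Icc] at hj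
    omega
  have : Finite ↥(Aset a b) := by
    apply Finite.of_injective
      (fun σ : ↥(Aset a b) => fun j : Finset.Icc a b => (⟨σ.1 j, hbound σ.1 σ.2 j j.2⟩ : Fin (b + 2)))
    rintro ⟨σ, hσ⟩ ⟨τ, hτ⟩ h
    ext j
    by_cases hj : j ∈ Finset.Icc a b
    · have := congrFun h ⟨j, hj⟩
      simpa [Fin.mk.injEq] using this
    · rw [hσ.2.1 j hj, hτ.2.1 j hj]
  exact Set.finite_coe_iff.mp this

lemma sigF_mem (m : ℕ) : (sigF_invol m).toPerm ∈ Aset 1 m := by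
  refine ⟨?_, ?_, ?_⟩
  · ext j
    simp [Equiv.Perm.mul_apply, Function.Involutive.coe_toPerm, sigF_invol m j]
  · intro j hj
    simp [Finset.mem_Icc] at hj
    simp only [Function.Involutive.coe_toPerm]
    unfold sigF
    split_ifs <;> omega
  · intro j
    simp only [Function.Involutive.coe_toPerm]
    rw [abs_le]
    unfold sigF
    constructor <;> split_ifs <;> push_cast <;> omega

lemma sigF_factor_pos (n m : ℕ) (ta : ℕ → ℕ → ℝ) (hn : 2 ≤ n) (hm : m ≤ n - 1)
    (h11 : 0 < ta 1 1)
    (hlow : ∀ i, 2 ≤ i → i ≤ n → 0 < ta i (i - 1))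
    (hup : ∀ i, 1 ≤ i → i ≤ n - 1 → 0 < ta i (i + 1)) :
    ∀ j ∈ Finset.Icc 1 m, 0 < ta j (sigF m j) := by
  intro j hj
  simp [Finset.mem_Icc] at hj
  unfold sigF
  split_ifs with h1 h2
  · have : j = 1 := by omega
    subst this; exact h11
  · exact hup j (by omega) (by omega)
  · exact hlow j (by omega) (by omega)

lemma mem_shape {m : ℕ} {σ : Equiv.Perm ℕ} (hσ : σ ∈ Aset 1 m) {j : ℕ}
    (hj : j ∈ Finset.Icc 1 m) : σ j = j ∨ (2 ≤ j ∧ σ j = j - 1) ∨ σ j = j + 1 := by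
  obtain ⟨h1, h2, h3⟩ := hσ
  simp [Finset.mem_Icc] at hj
  have habs := h3 j
  rw [abs_le] at habs
  by_cases hz : σ j = 0
  · exfalso
    have h0 : σ 0 = 0 := h2 0 (by simp)
    have : σ (σ j) = j := by
      have := congrArg (fun τ : Equiv.Perm ℕ => τ j) h1
      simpa [Equiv.Perm.mul_apply] using this
    rw [hz, h0] at this
    omega
  · omega

lemma ssum_pos (n m : ℕ) (ta : ℕ → ℕ → ℝ) (hn : 2 ≤ n) (hm : m ≤ n - 1)
    (h11 : 0 < ta 1 1)
    (hii : ∀ i, 2 ≤ i → i ≤ n → 0 ≤ ta i i)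
    (hlow : ∀ i, 2 ≤ i → i ≤ n → 0 < ta i (i - 1))
    (hup : ∀ i, 1 ≤ i → i ≤ n - 1 → 0 < ta i (i + 1)) :
    0 < Ssum ta 1 m := by
  rw [Ssum, show Aset 1 m = ↑(aset_finite 1 m).toFinset by simp, finsum_mem_coe_finset]
  apply Finset.sum_pos'
  · intro σ hσ
    rw [Set.Finite.mem_toFinset] at hσ
    apply Finset.prod_nonneg
    intro j hj
    have hj' := hj
    simp [Finset.mem_Icc] at hj'
    rcases mem_shape hσ hj with h | ⟨h2, h⟩ | h
    · rw [h]
      by_cases h1 : j = 1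
      · subst h1; exact h11.le
      · exact hii j (by omega) (by omega)
    · rw [h]; exact (hlow j h2 (by omega)).le
    · rw [h]; exact (hup j (by omega) (by omega)).le
  · refine ⟨(sigF_invol m).toPerm, (Set.Finite.mem_toFinset _).mpr (sigF_mem m), ?_⟩
    apply Finset.prod_pos
    intro j hj
    simpa [Function.Involutive.coe_toPerm] using
      sigF_factor_pos n m ta hn hm h11 hlow hup j hj

lemma delta_rec (ta : ℕ → ℕ → ℝ) (m : ℕ) (hm : 1 ≤ m) :
    deltaT ta (m + 1) = ta (m + 1) m * deltaT ta m - ta (m + 1) 0 * Ssum ta 1 m := by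
  unfold deltaT
  rw [Finset.prod_Icc_succ_top (by omega : 2 ≤ m + 1),
      Finset.sum_Icc_succ_top (by omega : 2 ≤ m + 1)]
  have h1 : ∀ k ∈ Finset.Icc 2 m,
      ta k 0 * (∏ l ∈ Finset.Icc (k + 1) (m + 1), ta l (l - 1)) * Ssum ta 1 (k - 1)
      = ta (m + 1) m * (ta k 0 * (∏ l ∈ Finset.Icc (k + 1) m, ta l (l - 1)) * Ssum ta 1 (k - 1)) := by
    intro k hk
    simp only [Finset.mem_Icc] at hk
    rw [Finset.prod_Icc_succ_top (by omega : k + 1 ≤ m + 1)]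
    simp only [Nat.add_sub_cancel]
    ring
  rw [Finset.sum_congr rfl h1, ← Finset.mul_sum, Finset.Icc_eq_empty (by omega : ¬ m + 1 + 1 ≤ m + 1), Finset.prod_empty]
  simp only [Nat.add_sub_cancel]
  ring


/-- If `δ̃(n−1) ≤ 0` then `δ̃(n) < 0`. -/
theorem stmt6 (n : ℕ) (hn : 2 ≤ n) (ta : ℕ → ℕ → ℝ)
    (hi0 : ∀ i, 2 ≤ i → i ≤ n → 0 < ta i 0)
    (h11 : 0 < ta 1 1)
    (hii : ∀ i, 2 ≤ i → i ≤ n → 0 ≤ ta i i)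
    (hlow : ∀ i, 2 ≤ i → i ≤ n → 0 < ta i (i - 1))
    (hup : ∀ i, 1 ≤ i → i ≤ n - 1 → 0 < ta i (i + 1)) :
    deltaT ta (n - 1) ≤ 0 → deltaT ta n < 0 := by
  intro hle
  obtain ⟨m, rfl⟩ : ∃ m, n = m + 1 := ⟨n - 1, by omega⟩
  have hm : 1 ≤ m := by omega
  rw [Nat.add_sub_cancel] at hle
  rw [delta_rec ta m hm]
  have hS : 0 < Ssum ta 1 m :=
    ssum_pos (m + 1) m ta hn (by omega) h11 hii hlow hup
  have h1 : 0 < ta (m + 1) m := by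
    have := hlow (m + 1) (by omega) le_rfl
    simpa using this
  have h2 : 0 < ta (m + 1) 0 := hi0 (m + 1) (by omega) le_rfl
  nlinarith
end

section
/- Let p > 0. There exists a constant c_p > 0 such that for every a > 0 and every x ∈ ℝ: if p ≤ 1 then |a + x|^{1+p} ≤ a^{1+p} + (1+p)a^p x + c_p |x|^{1+p}, and if p > 1 then |a + x|^{1+p} ≤ a^{1+p} + (1+p)a^p x + a^p + c_p(|x|^{2p} + 1). -/
open Real

/-- Tangent-line upper bound: for `r ≥ 1`, `w^r - v^r ≤ r w^{r-1}(w-v)`. -/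
lemma tangent_aux {r : ℝ} (hr : 1 ≤ r) {w v : ℝ} (hw : 0 < w) (hv : 0 < v) :
    w ^ r - v ^ r ≤ r * w ^ (r - 1) * (w - v) := by
  have hs : (-1 : ℝ) ≤ v / w - 1 := by
    have : 0 ≤ v / w := by positivity
    linarith
  have hb := one_add_mul_self_le_rpow_one_add hs hr
  rw [show 1 + (v / w - 1) = v / w by ring, Real.div_rpow hv.le hw.le] at hb
  have hwr : (0:ℝ) < w ^ r := Real.rpow_pos_of_pos hw r
  rw [le_div_iff₀ hwr] at hb
  have hw1 : w ^ (r - 1) * w = w ^ r := by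
    rw [← Real.rpow_add_one hw.ne' (r - 1), sub_add_cancel]
  have h2 : (v / w - 1) * w ^ r = (v - w) * w ^ (r - 1) := by
    field_simp
    nlinarith [hw1]
  nlinarith [hb, h2]

/-- Subadditivity of rpow for exponent in `[0,1]` on nonneg reals. -/
lemma subadd_aux {s : ℝ} (hs0 : 0 ≤ s) (hs1 : s ≤ 1) {x y : ℝ} (hx : 0 ≤ x) (hy : 0 ≤ y) :
    (x + y) ^ s ≤ x ^ s + y ^ s := by
  have := NNReal.rpow_add_le_add_rpow x.toNNReal y.toNNReal hs0 hs1
  have h := NNReal.coe_le_coe.2 this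
  push_cast [NNReal.coe_rpow] at h
  rwa [Real.coe_toNNReal x hx, Real.coe_toNNReal y hy] at h

/-- For `p ≤ 1`, `0 < t ≤ a`: `t * a^p ≤ t^p * a`. -/
lemma ratio_aux {p a t : ℝ} (hp1 : p ≤ 1) (ha : 0 < a) (ht : 0 < t) (hta : t ≤ a) :
    t * a ^ p ≤ t ^ p * a := by
  have h0 : 0 < t / a := by positivity
  have h1 : t / a ≤ 1 := (div_le_one ha).2 hta
  have := Real.rpow_le_rpow_of_exponent_ge h0 h1 hp1
  rw [Real.rpow_one, Real.div_rpow ht.le ha.le] at this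
  have hap : (0:ℝ) < a ^ p := Real.rpow_pos_of_pos ha p
  rw [div_le_div_iff₀ ha hap] at this
  linarith

lemma branch1 {p : ℝ} (hp : 0 < p) (hp1 : p ≤ 1) {a : ℝ} (x : ℝ) (ha : 0 < a) {c : ℝ}
    (hc1 : 2 + p ≤ c) :
    |a + x| ^ (1 + p) ≤ a ^ (1 + p) + (1 + p) * a ^ p * x + c * |x| ^ (1 + p) := by
  have hr : (1:ℝ) ≤ 1 + p := by linarith
  rcases lt_trichotomy x 0 with hx | rfl | hx
  · -- x < 0
    have hu : 0 < -x := by linarith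
    set u := -x with hu_def
    have hxu : x = -u := by rw [hu_def]; ring
    have habs : |x| = u := by rw [hxu, abs_neg, abs_of_pos hu]
    have hur : (0:ℝ) < u ^ (1+p) := Real.rpow_pos_of_pos hu _
    have huu : u ^ p * u = u ^ (1+p) := by
      rw [show (1:ℝ)+p = p+1 by ring, Real.rpow_add_one hu.ne']
    rcases le_or_gt a u with hau | hau
    · -- a ≤ u
      have h1 : |a + x| ≤ u := by
        rw [hxu, abs_le]; constructor <;> linarith
      have h2 : |a + x| ^ (1+p) ≤ u ^ (1+p) :=
        Real.rpow_le_rpow (abs_nonneg _) h1 (by linarith)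
      have h3 : a ^ p ≤ u ^ p := Real.rpow_le_rpow ha.le hau hp.le
      have har : (0:ℝ) < a ^ (1+p) := Real.rpow_pos_of_pos ha _
      have h4 : a ^ p * u ≤ u ^ (1+p) := by
        calc a ^ p * u ≤ u ^ p * u := by nlinarith
        _ = u ^ (1+p) := huu
      rw [habs, hxu]
      rw [hxu] at h2
      nlinarith [h2, h4, har, hur, mul_le_mul_of_nonneg_left h4 (by linarith : (0:ℝ) ≤ 1+p)]
    · -- u < a
      have hw : 0 < a - u := by linarith
      have habs2 : |a + x| = a - u := by
        rw [hxu, show a + -u = a - u by ring, abs_of_pos hw]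
      have t1 := tangent_aux hr hw ha
      rw [show (1:ℝ) + p - 1 = p by ring] at t1
      have k2 := ratio_aux hp1 ha hw (by linarith)
      have k3 := ratio_aux hp1 ha hu hau.le
      have k3' : u * u * a ^ p ≤ u ^ (1+p) * a := by nlinarith [k3, huu, hu.le]
      rw [habs, habs2, hxu, ← mul_le_mul_iff_of_pos_right ha]
      nlinarith [mul_le_mul_of_nonneg_left k2 (by positivity : (0:ℝ) ≤ (1+p)*u),
        mul_le_mul_of_nonneg_left k3' (by linarith : (0:ℝ) ≤ 1+p),
        mul_le_mul_of_nonneg_right t1 ha.le, hur, mul_pos hur ha]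
  · simp [abs_of_pos ha, Real.zero_rpow (by linarith : (1:ℝ)+p ≠ 0)]
  · -- 0 < x
    have hax : 0 < a + x := by linarith
    have t1 := tangent_aux hr hax ha
    rw [show (1:ℝ) + p - 1 = p by ring] at t1
    have t2 : (a + x) ^ p ≤ a ^ p + x ^ p := subadd_aux hp.le hp1 ha.le hx.le
    have hxx : x ^ p * x = x ^ (1+p) := by
      rw [show (1:ℝ)+p = p+1 by ring, Real.rpow_add_one hx.ne']
    have hxr : (0:ℝ) ≤ x ^ (1+p) := (Real.rpow_pos_of_pos hx _).le
    rw [abs_of_pos hax, abs_of_pos hx]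
    nlinarith [t1, mul_le_mul_of_nonneg_left t2 (by positivity : (0:ℝ) ≤ (1+p)*x), hxx, hxr]

set_option maxHeartbeats 1000000 in
lemma branch2 {p : ℝ} (hp2 : 1 < p) {a : ℝ} (x : ℝ) (ha : 0 < a) {c : ℝ}
    (hcA : 3 ^ (1+p) + (1+p) * 2 ^ p ≤ c)
    (hcK : ((1+p) * p * (3/2) ^ (p-1)) ^ p ≤ c) (hc0 : 0 < c) :
    |a + x| ^ (1 + p) ≤ a ^ (1 + p) + (1 + p) * a ^ p * x + a ^ p + c * (|x| ^ (2*p) + 1) := by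
  have hp : (0:ℝ) < p := by linarith
  have hr : (1:ℝ) ≤ 1 + p := by linarith
  have hap : (0:ℝ) < a ^ p := Real.rpow_pos_of_pos ha p
  have har : (0:ℝ) < a ^ (1+p) := Real.rpow_pos_of_pos ha _
  have hT : (0:ℝ) < |x| ^ (2*p) + 1 := by positivity
  rcases le_or_gt a (2 * |x|) with hcase | hcase
  · -- a ≤ 2|x| : crude bound
    have hx : 0 < |x| := by linarith
    have h1 : |a + x| ≤ 3 * |x| := by
      calc |a + x| ≤ |a| + |x| := abs_add_le _ _
      _ = a + |x| := by rw [abs_of_pos ha]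
      _ ≤ 3 * |x| := by linarith
    have h2 : |a + x| ^ (1+p) ≤ 3 ^ (1+p) * |x| ^ (1+p) := by
      calc |a + x| ^ (1+p) ≤ (3 * |x|) ^ (1+p) :=
        Real.rpow_le_rpow (abs_nonneg _) h1 (by linarith)
      _ = 3 ^ (1+p) * |x| ^ (1+p) := Real.mul_rpow (by norm_num) (abs_nonneg x)
    have h3 : |x| ^ (1+p) ≤ |x| ^ (2*p) + 1 := by
      rcases le_or_gt |x| 1 with h | h
      · have h' : |x| ^ (1+p) ≤ 1 := by
          calc |x| ^ (1+p) ≤ 1 ^ (1+p) := Real.rpow_le_rpow (abs_nonneg x) h (by linarith)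
          _ = 1 := Real.one_rpow _
        have : (0:ℝ) ≤ |x| ^ (2*p) := Real.rpow_nonneg (abs_nonneg x) _
        linarith
      · have := Real.rpow_le_rpow_of_exponent_le h.le (by linarith : 1 + p ≤ 2*p)
        have h0 : (0:ℝ) ≤ |x| ^ (2*p) := Real.rpow_nonneg (abs_nonneg x) _
        linarith
    have h4 : a ^ p ≤ 2 ^ p * |x| ^ p := by
      calc a ^ p ≤ (2 * |x|) ^ p := Real.rpow_le_rpow ha.le hcase hp.le
      _ = 2 ^ p * |x| ^ p := Real.mul_rpow (by norm_num) (abs_nonneg x)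
    have h5 : |x| ^ p * |x| = |x| ^ (1+p) := by
      rw [show (1:ℝ)+p = p+1 by ring, Real.rpow_add_one hx.ne']
    have h2p : (0:ℝ) < 2 ^ p := Real.rpow_pos_of_pos (by norm_num) p
    have h6 : -((1+p) * a ^ p * x) ≤ (1+p) * 2 ^ p * (|x| ^ (2*p) + 1) := by
      have hA : a ^ p * (-x) ≤ 2 ^ p * (|x| ^ (2*p) + 1) := by
        calc a ^ p * (-x) ≤ a ^ p * |x| := by
              have := neg_le_abs x
              nlinarith
        _ ≤ (2 ^ p * |x| ^ p) * |x| := by nlinarith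
        _ = 2 ^ p * |x| ^ (1+p) := by rw [mul_assoc, h5]
        _ ≤ 2 ^ p * (|x| ^ (2*p) + 1) := by nlinarith
      calc -((1+p) * a ^ p * x) = (1+p) * (a ^ p * (-x)) := by ring
      _ ≤ (1+p) * (2 ^ p * (|x| ^ (2*p) + 1)) :=
          mul_le_mul_of_nonneg_left hA (by linarith)
      _ = (1+p) * 2 ^ p * (|x| ^ (2*p) + 1) := by ring
    have h9 : 3 ^ (1+p) * |x| ^ (1+p) ≤ 3 ^ (1+p) * (|x| ^ (2*p) + 1) :=
      mul_le_mul_of_nonneg_left h3 (Real.rpow_pos_of_pos (by norm_num) _).le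
    nlinarith [h2, h6, h9, hT, mul_le_mul_of_nonneg_right hcA hT.le]
  · -- 2|x| < a : Taylor-type bound
    obtain ⟨K, hK_def⟩ : ∃ K, K = (1+p) * p * (3/2 : ℝ) ^ (p-1) := ⟨_, rfl⟩
    rw [← hK_def] at hcK
    have h32 : (1:ℝ) ≤ (3/2 : ℝ) ^ (p-1) := by
      have := Real.rpow_le_rpow_of_exponent_le (by norm_num : (1:ℝ) ≤ 3/2)
        (by linarith : (0:ℝ) ≤ p - 1)
      rwa [Real.rpow_zero] at this
    have h32p : (0:ℝ) < (3/2:ℝ) ^ (p-1) := Real.rpow_pos_of_pos (by norm_num) _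
    have hK : 0 < K := by rw [hK_def]; positivity
    have hax : 0 < a + x := by
      have := neg_abs_le x
      linarith
    have hap1 : (0:ℝ) < a ^ (p-1) := Real.rpow_pos_of_pos ha _
    have hap1a : a ^ (p-1) * a = a ^ p := by
      rw [← Real.rpow_add_one ha.ne' (p-1), sub_add_cancel]
    have claim1 : (a + x) ^ (1+p) ≤ a ^ (1+p) + (1+p) * a ^ p * x + K * a ^ (p-1) * x^2 := by
      have hKeq : K * (a ^ (p-1) * x^2) = (1+p) * p * ((3/2) ^ (p-1) * a ^ (p-1)) * x^2 := by
        rw [hK_def]; ring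
      rcases lt_trichotomy x 0 with hx | rfl | hx
      · -- x < 0
        have hu : 0 < -x := by linarith
        have t1 := tangent_aux hr hax ha
        rw [show (1:ℝ) + p - 1 = p by ring] at t1
        have t2 := tangent_aux hp2.le ha hax
        -- t2 : a^p - (a+x)^p ≤ p * a^(p-1) * (a - (a+x))
        have hRpK : (1+p) * p ≤ K := by
          rw [hK_def]
          nlinarith [h32, mul_pos (by linarith : (0:ℝ) < 1+p) hp]
        nlinarith [t1, mul_le_mul_of_nonneg_left t2 (by positivity : (0:ℝ) ≤ (1+p) * (-x)),
          mul_le_mul_of_nonneg_right hRpK (by positivity : (0:ℝ) ≤ a ^ (p-1) * x^2)]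
      · simp
      · -- 0 < x
        have t1 := tangent_aux hr hax ha
        rw [show (1:ℝ) + p - 1 = p by ring] at t1
        have t2 := tangent_aux hp2.le hax ha
        have t3 : (a + x) ^ (p-1) ≤ (3/2) ^ (p-1) * a ^ (p-1) := by
          calc (a + x) ^ (p-1) ≤ (3/2 * a) ^ (p-1) := by
                apply Real.rpow_le_rpow hax.le _ (by linarith)
                have := le_abs_self x; linarith
          _ = (3/2) ^ (p-1) * a ^ (p-1) := Real.mul_rpow (by norm_num) ha.le
        have s1 : (a+x)^(1+p) ≤ a^(1+p) + (1+p)*(a+x)^p*x := by linarith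
        have s2 := mul_le_mul_of_nonneg_left t2 (by positivity : (0:ℝ) ≤ (1+p) * x)
        have s3 := mul_le_mul_of_nonneg_left t3 (by positivity : (0:ℝ) ≤ (1+p) * p * x^2)
        linarith [s1, s2, s3, hKeq]
    have claim2 : K * a ^ (p-1) * x^2 ≤ a ^ p + c * (|x| ^ (2*p) + 1) := by
      rcases le_or_gt (K * x^2) a with hKx | hKx
      · have h' : a ^ (p-1) * (K * x^2) ≤ a ^ (p-1) * a :=
          mul_le_mul_of_nonneg_left hKx hap1.le
        linarith [h', hap1a, mul_pos hc0 hT]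
      · have hKx0 : 0 < K * x^2 := lt_trans ha hKx
        have hbase : a ^ (p-1) ≤ (K * x^2) ^ (p-1) :=
          Real.rpow_le_rpow ha.le hKx.le (by linarith)
        have hpow : (K * x^2) ^ (p-1) * (K * x^2) = (K * x^2) ^ p := by
          rw [← Real.rpow_add_one hKx0.ne' (p-1), sub_add_cancel]
        have hsplit : (K * x^2) ^ p = K ^ p * |x| ^ (2*p) := by
          rw [Real.mul_rpow hK.le (sq_nonneg x)]
          congr 1
          rw [show (2:ℝ)*p = ((2:ℕ):ℝ)*p by norm_num, Real.rpow_natCast_mul (abs_nonneg x),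
            sq_abs]
        have hxp : (0:ℝ) ≤ |x| ^ (2*p) := Real.rpow_nonneg (abs_nonneg x) _
        linarith [mul_le_mul_of_nonneg_right hbase hKx0.le, hpow, hsplit,
          mul_le_mul_of_nonneg_right hcK hxp, hap.le, hc0]
    rw [abs_of_pos hax]
    linarith

/-- Elementary power inequality: for `p > 0` there is `c_p > 0` such that for all `a > 0`
and `x ∈ ℝ`, `|a+x|^{1+p} ≤ a^{1+p} + (1+p)a^p x + c_p|x|^{1+p}` when `p ≤ 1`, and
`|a+x|^{1+p} ≤ a^{1+p} + (1+p)a^p x + a^p + c_p(|x|^{2p}+1)` when `p > 1`. -/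

theorem stmt8 (p : ℝ) (hp : 0 < p) :
    ∃ c : ℝ, 0 < c ∧ ∀ a x : ℝ, 0 < a →
      (p ≤ 1 →
        |a + x| ^ (1 + p) ≤ a ^ (1 + p) + (1 + p) * a ^ p * x + c * |x| ^ (1 + p)) ∧
      (1 < p →
        |a + x| ^ (1 + p) ≤
          a ^ (1 + p) + (1 + p) * a ^ p * x + a ^ p + c * (|x| ^ (2 * p) + 1)) := by
  have h3p : (0:ℝ) < 3 ^ (1+p) := Real.rpow_pos_of_pos (by norm_num) _
  have h2p : (0:ℝ) < 2 ^ p := Real.rpow_pos_of_pos (by norm_num) _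
  have h32p : (0:ℝ) < (3/2:ℝ) ^ (p-1) := Real.rpow_pos_of_pos (by norm_num) _
  have hKp : (0:ℝ) < ((1+p) * p * (3/2) ^ (p-1)) ^ p :=
    Real.rpow_pos_of_pos (by positivity) _
  refine ⟨(2+p) + (3 ^ (1+p) + (1+p) * 2 ^ p) + ((1+p) * p * (3/2) ^ (p-1)) ^ p,
    by positivity, fun a x ha => ⟨fun hp1 => ?_, fun hp2 => ?_⟩⟩
  · exact branch1 hp hp1 x ha (by nlinarith)
  · exact branch2 hp2 x ha (by nlinarith) (by nlinarith) (by positivity)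
end

section
/- Let p > 0. There exists a constant K̃₁ > 0, depending only on p, such that for every probability space (Ω, 𝓕, ℙ), every constant k > 0, and every real random variable Y with E|Y|^{1+p} < ∞ (when p ≤ 1) or with E|Y| < ∞ and E|Y|^{2p} < ∞ (when p > 1), the following hold: if p ≤ 1 then E|k + Y|^{1+p} ≤ k^{1+p} + (1+p)k^p E[Y] + K̃₁ E|Y|^{1+p}; if p > 1 then E|k + Y|^{1+p} ≤ k^{1+p} + (1+p)k^p E[Y] + k^p + K̃₁(E|Y|^{2p} + 1). -/
open MeasureTheory

section Helpers
open Real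

/-- Tangent-line inequality for `x ↦ x^q`, `q ≥ 1`, on nonneg reals. -/
lemma tangent_le {q b x : ℝ} (hq : 1 ≤ q) (hb : 0 ≤ b) (hx : 0 ≤ x) :
    b ^ q + q * b ^ (q - 1) * (x - b) ≤ x ^ q := by
  rcases hb.eq_or_lt with rfl | hb'
  · rcases hq.eq_or_lt with rfl | hq'
    · simp
    · rw [Real.zero_rpow (by linarith), Real.zero_rpow (by linarith)]
      simpa using Real.rpow_nonneg hx q
  · have hs : -1 ≤ x / b - 1 := by
      have : 0 ≤ x / b := div_nonneg hx hb'.le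
      linarith
    have h := one_add_mul_self_le_rpow_one_add hs hq
    rw [add_sub_cancel, Real.div_rpow hx hb'.le] at h
    have hbq : 0 < b ^ q := Real.rpow_pos_of_pos hb' q
    have h2 := mul_le_mul_of_nonneg_right h hbq.le
    rw [div_mul_cancel₀ _ hbq.ne'] at h2
    have hb1 : b ^ (q - 1) = b ^ q / b := Real.rpow_sub_one hb'.ne' q
    calc b ^ q + q * b ^ (q - 1) * (x - b)
        = (1 + q * (x / b - 1)) * b ^ q := by
          rw [hb1]; field_simp
      _ ≤ x ^ q := h2

/-- Subadditivity of `x ↦ x^p` for `0 ≤ p ≤ 1` on nonneg reals. -/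
lemma rpow_subadd {a b p : ℝ} (ha : 0 ≤ a) (hb : 0 ≤ b) (hp : 0 ≤ p) (hp1 : p ≤ 1) :
    (a + b) ^ p ≤ a ^ p + b ^ p := by
  have h := NNReal.rpow_add_le_add_rpow a.toNNReal b.toNNReal hp hp1
  rw [← Real.toNNReal_add ha hb] at h
  have h2 := NNReal.coe_le_coe.2 h
  simpa [NNReal.coe_rpow, Real.coe_toNNReal _ ha, Real.coe_toNNReal _ hb,
    Real.coe_toNNReal _ (add_nonneg ha hb)] using h2

/-- `y^r ≤ y^s + 1` for `0 ≤ y`, `0 ≤ r ≤ s`. -/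
lemma rpow_le_rpow_add_one {y r s : ℝ} (hy : 0 ≤ y) (hr : 0 ≤ r) (hrs : r ≤ s) :
    y ^ r ≤ y ^ s + 1 := by
  rcases le_or_gt y 1 with h1 | h1
  · have : y ^ r ≤ 1 := Real.rpow_le_one hy h1 hr
    have : (0:ℝ) ≤ y ^ s := Real.rpow_nonneg hy s
    linarith [Real.rpow_le_one hy h1 hr]
  · have := Real.rpow_le_rpow_of_exponent_le h1.le hrs
    linarith

/-- `(a+b)^r ≤ 2^r (a^r + b^r)` for nonneg `a b`, `0 ≤ r`. -/
lemma rpow_add_le_two_rpow {a b r : ℝ} (ha : 0 ≤ a) (hb : 0 ≤ b) (hr : 0 ≤ r) :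
    (a + b) ^ r ≤ 2 ^ r * (a ^ r + b ^ r) := by
  have h2 : (0:ℝ) ≤ 2 ^ r := Real.rpow_nonneg (by norm_num) r
  rcases le_total a b with h | h
  · have : (a + b) ^ r ≤ (2 * b) ^ r :=
      Real.rpow_le_rpow (add_nonneg ha hb) (by linarith) hr
    rw [Real.mul_rpow (by norm_num) hb] at this
    have har : (0:ℝ) ≤ a ^ r := Real.rpow_nonneg ha r
    nlinarith
  · have : (a + b) ^ r ≤ (2 * a) ^ r :=
      Real.rpow_le_rpow (add_nonneg ha hb) (by linarith) hr
    rw [Real.mul_rpow (by norm_num) ha] at this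
    have hbr : (0:ℝ) ≤ b ^ r := Real.rpow_nonneg hb r
    nlinarith

/-- Young-type splitting: `c·a^{p-1}·t² ≤ a^p + c^p |t|^{2p}`. -/
lemma young_split {p c a t : ℝ} (hp : 1 < p) (hc : 0 < c) (ha : 0 < a) :
    c * (a ^ (p - 1) * t ^ 2) ≤ a ^ p + c ^ p * |t| ^ (2 * p) := by
  have hcp : (0:ℝ) ≤ c ^ p * |t| ^ (2 * p) :=
    mul_nonneg (Real.rpow_nonneg hc.le p) (Real.rpow_nonneg (abs_nonneg t) _)
  have hap : (0:ℝ) ≤ a ^ p := Real.rpow_nonneg ha.le p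
  rcases le_or_gt (c * t ^ 2) a with h | h
  · have hap1 : (0:ℝ) ≤ a ^ (p - 1) := Real.rpow_nonneg ha.le _
    have : c * (a ^ (p - 1) * t ^ 2) = a ^ (p - 1) * (c * t ^ 2) := by ring
    rw [this]
    have h1 : a ^ (p - 1) * (c * t ^ 2) ≤ a ^ (p - 1) * a :=
      mul_le_mul_of_nonneg_left h hap1
    have h2 : a ^ (p - 1) * a = a ^ p := by
      rw [← Real.rpow_add_one ha.ne' (p - 1)]; ring_nf
    linarith
  · rcases eq_or_ne t 0 with rfl | ht
    · nlinarith
    have ht2 : (0:ℝ) < t ^ 2 := by positivity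
    have h1 : a ^ (p - 1) ≤ (c * t ^ 2) ^ (p - 1) :=
      Real.rpow_le_rpow ha.le h.le (by linarith)
    have h2 : c * (a ^ (p - 1) * t ^ 2) ≤ c * ((c * t ^ 2) ^ (p - 1) * t ^ 2) := by
      have := mul_le_mul_of_nonneg_right h1 ht2.le
      nlinarith
    have h3 : c * ((c * t ^ 2) ^ (p - 1) * t ^ 2) = c ^ p * |t| ^ (2 * p) := by
      rw [Real.mul_rpow hc.le ht2.le]
      have e1 : c * (c ^ (p - 1) * (t ^ 2) ^ (p - 1) * t ^ 2)
          = (c ^ (p - 1) * c) * ((t ^ 2) ^ (p - 1) * t ^ 2) := by ring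
      rw [e1, ← Real.rpow_add_one hc.ne' (p - 1),
        ← Real.rpow_add_one ht2.ne' (p - 1), sub_add_cancel]
      have e2 : t ^ 2 = |t| ^ (2:ℝ) := by
        rw [Real.rpow_two, sq_abs]
      rw [e2, ← Real.rpow_mul (abs_nonneg t)]
    linarith

/-- Pointwise inequality for `0 < p ≤ 1`. -/
lemma ptwise1 {p k y : ℝ} (hp : 0 < p) (hp1 : p ≤ 1) (hk : 0 < k) :
    |k + y| ^ (1 + p) ≤ k ^ (1 + p) + (1 + p) * k ^ p * y + 2 * (1 + p) * |y| ^ (1 + p) := by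
  have hq : (1:ℝ) ≤ 1 + p := by linarith
  rcases le_or_gt 0 y with hy0 | hy
  · rcases hy0.eq_or_lt with rfl | hy
    · simp [abs_of_pos hk, Real.zero_rpow (show (1:ℝ)+p ≠ 0 by positivity)]
    · rw [abs_of_pos (by linarith), abs_of_pos hy]
      have t1 := tangent_le hq (show (0:ℝ) ≤ k + y by linarith) hk.le
      rw [add_sub_cancel_left] at t1
      have t2 : (k + y) ^ p ≤ k ^ p + y ^ p := rpow_subadd hk.le hy.le hp.le hp1
      have s1 := mul_le_mul_of_nonneg_left t2 (show (0:ℝ) ≤ (1 + p) * y by positivity)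
      have e1 : y ^ (1 + p) = y * y ^ p := by
        rw [Real.rpow_add hy, Real.rpow_one]
      have h4 : (0:ℝ) ≤ (1 + p) * y ^ (1 + p) :=
        mul_nonneg (by linarith) (Real.rpow_nonneg hy.le _)
      nlinarith [t1, s1, h4, e1]
  · rcases le_or_gt 0 (k + y) with hky | hky
    · rw [abs_of_nonneg hky, abs_of_neg hy]
      have t1 := tangent_le hq hky hk.le
      rw [add_sub_cancel_left] at t1
      have t2 : k ^ p ≤ (k + y) ^ p + (-y) ^ p := by
        have h := rpow_subadd hky (show (0:ℝ) ≤ -y by linarith) hp.le hp1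
        simpa using h
      have s1 := mul_le_mul_of_nonneg_left t2 (show (0:ℝ) ≤ (1 + p) * (-y) by nlinarith)
      have e1 : (-y) ^ (1 + p) = (-y) * (-y) ^ p := by
        rw [Real.rpow_add (by linarith), Real.rpow_one]
      have h4 : (0:ℝ) ≤ (1 + p) * (-y) ^ (1 + p) :=
        mul_nonneg (by linarith) (Real.rpow_nonneg (by linarith) _)
      nlinarith [t1, s1, h4, e1]
    · have hy' : y < 0 := by linarith
      rw [abs_of_neg hky, abs_of_neg hy']
      have h0 : (-(k + y)) ^ (1 + p) ≤ (-y) ^ (1 + p) :=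
        Real.rpow_le_rpow (by linarith) (by linarith) (by linarith)
      have h1 : k ^ p ≤ (-y) ^ p := Real.rpow_le_rpow hk.le (by linarith) hp.le
      have s1 := mul_le_mul_of_nonneg_left h1 (show (0:ℝ) ≤ (1 + p) * (-y) by nlinarith)
      have e1 : (-y) ^ (1 + p) = (-y) * (-y) ^ p := by
        rw [Real.rpow_add (by linarith), Real.rpow_one]
      have h4 : (0:ℝ) ≤ (1 + p) * (-y) ^ (1 + p) :=
        mul_nonneg (by linarith) (Real.rpow_nonneg (by linarith) _)
      have hkq : (0:ℝ) ≤ k ^ (1 + p) := Real.rpow_nonneg hk.le _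
      have h5 : (0:ℝ) ≤ (-y) ^ (1 + p) := Real.rpow_nonneg (by linarith) _
      nlinarith [h0, s1, e1, h4, hkq, mul_nonneg hp.le h5]

/-- Pointwise inequality for `p > 1`. -/
lemma ptwise2 {p k y : ℝ} (hp : 1 < p) (hk : 0 < k) :
    |k + y| ^ (1 + p) ≤ k ^ (1 + p) + (1 + p) * k ^ p * y + k ^ p +
      (((1+p)*p*2^p) ^ p + (1+p)*p*2^p + (2+p)) * (|y| ^ (2*p) + 1) := by
  have hp0 : (0:ℝ) < p := by linarith
  have hq : (1:ℝ) ≤ 1 + p := by linarith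
  have h2p : (1:ℝ) ≤ (2:ℝ) ^ p := by
    calc (1:ℝ) = (2:ℝ) ^ (0:ℝ) := by simp
      _ ≤ (2:ℝ) ^ p := Real.rpow_le_rpow_of_exponent_le one_le_two hp0.le
  have hC0 : (0:ℝ) < (1+p)*p*2^p := by positivity
  have hC0p : (0:ℝ) < ((1+p)*p*2^p) ^ p := Real.rpow_pos_of_pos hC0 p
  have hX : (0:ℝ) ≤ |y| ^ (2*p) := Real.rpow_nonneg (abs_nonneg y) _
  have hX1 : (0:ℝ) ≤ |y| ^ (2*p) + 1 := by linarith
  have habs : |y| ^ (1+p) ≤ |y| ^ (2*p) + 1 :=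
    rpow_le_rpow_add_one (abs_nonneg y) (by linarith) (by linarith)
  have hkp : (0:ℝ) ≤ k ^ p := Real.rpow_nonneg hk.le p
  rcases le_or_gt 0 (k + y) with hky | hky
  · rw [abs_of_nonneg hky]
    rcases le_or_gt 0 y with hy0 | hy
    · rcases hy0.eq_or_lt with rfl | hy
      · simp only [add_zero, abs_zero, mul_zero]
        rw [Real.zero_rpow (show 2*p ≠ 0 by positivity)]
        nlinarith [hkp, hC0, hC0p]
      · have hky' : (0:ℝ) < k + y := by linarith
        have t1 := tangent_le hq hky'.le hk.le
        rw [add_sub_cancel_left] at t1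
        have t2 := tangent_le hp.le hky'.le hk.le
        have t3 : (k + y) ^ (p-1) ≤ 2^p * (k^(p-1) + y^(p-1)) := by
          have h := rpow_add_le_two_rpow hk.le hy.le (show (0:ℝ) ≤ p - 1 by linarith)
          have h2 : (2:ℝ)^(p-1) ≤ (2:ℝ)^p :=
            Real.rpow_le_rpow_of_exponent_le one_le_two (by linarith)
          have h3 : (0:ℝ) ≤ k^(p-1) + y^(p-1) := by positivity
          nlinarith
        have s1 := mul_le_mul_of_nonneg_left t2 (show (0:ℝ) ≤ (1+p)*y by positivity)
        have s2 := mul_le_mul_of_nonneg_left t3 (show (0:ℝ) ≤ (1+p)*p*y^2 by positivity)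
        have young := young_split (c := (1+p)*p*2^p) (t := y) hp hC0 hk
        have e5 : y^(p-1) * y^2 = y^(p+1) := by
          rw [← Real.rpow_natCast y 2, ← Real.rpow_add hy]
          congr 1
          ring
        have e5' : (1+p)*p*2^p*(y^(p-1) * y^2) = (1+p)*p*2^p*y^(p+1) := by rw [e5]
        have h6 : y^(p+1) ≤ |y|^(2*p) + 1 := by
          have := rpow_le_rpow_add_one hy.le (show (0:ℝ) ≤ p+1 by linarith)
            (show p+1 ≤ 2*p by linarith)
          rwa [abs_of_pos hy]
        have s3 := mul_le_mul_of_nonneg_left h6 hC0.le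
        have hrest : (0:ℝ) ≤ (2+p)*(|y|^(2*p)+1) := mul_nonneg (by linarith) hX1
        linarith [t1, s1, s2, young, e5', s3, hrest, hC0p.le, hX]
    · -- -k ≤ y < 0
      have t1 := tangent_le hq hky hk.le
      rw [add_sub_cancel_left] at t1
      have t2 := tangent_le hp.le hk.le hky
      have s1 := mul_le_mul_of_nonpos_left t2 (show (1+p)*y ≤ 0 by nlinarith)
      have hmono : ((1+p)*p)^p ≤ ((1+p)*p*2^p)^p := by
        refine Real.rpow_le_rpow (by positivity) ?_ hp0.le
        nlinarith [mul_nonneg (show (0:ℝ) ≤ (1+p)*p by positivity)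
          (show (0:ℝ) ≤ 2^p - 1 by linarith)]
      have young := young_split (c := (1+p)*p) (t := y) hp (by positivity) hk
      have sX := mul_le_mul_of_nonneg_right hmono hX
      have hr1 : (0:ℝ) ≤ ((1+p)*p*2^p)*(|y|^(2*p)+1) := mul_nonneg hC0.le hX1
      have hr2 : (0:ℝ) ≤ (2+p)*(|y|^(2*p)+1) := mul_nonneg (by linarith) hX1
      linarith [t1, s1, young, sX, hr1, hr2, hC0p.le, hX]
  · rw [abs_of_neg hky]
    have hy : y < 0 := by linarith
    have e0 : |y| = -y := abs_of_neg hy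
    have h0 : (-(k+y))^(1+p) ≤ |y|^(1+p) := by
      rw [e0]
      exact Real.rpow_le_rpow (by linarith) (by linarith) (by linarith)
    have h1 : k ^ p ≤ |y| ^ p := by
      rw [e0]; exact Real.rpow_le_rpow hk.le (by linarith) hp0.le
    have e1 : |y| ^ (1+p) = |y| * |y| ^ p := by
      rw [Real.rpow_add (by rw [e0]; linarith), Real.rpow_one]
    have s1 := mul_le_mul_of_nonneg_left h1 (show (0:ℝ) ≤ (1+p)*|y| by positivity)
    have e2 : (1+p) * k^p * y = -((1+p) * |y| * k^p) := by rw [e0]; ring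
    have e1' : (1+p) * (|y| * |y| ^ p) = (1+p) * (|y| ^ (1+p)) := by rw [e1]
    have hs : (1+p)*(|y|^(1+p)) ≤ (1+p)*(|y|^(2*p)+1) :=
      mul_le_mul_of_nonneg_left habs (by linarith)
    have hkq : (0:ℝ) ≤ k^(1+p) := Real.rpow_nonneg hk.le _
    have hr1 : (0:ℝ) ≤ ((1+p)*p*2^p)*(|y|^(2*p)+1) := mul_nonneg hC0.le hX1
    have hr2 : (0:ℝ) ≤ (((1+p)*p*2^p)^p)*(|y|^(2*p)+1) := mul_nonneg hC0p.le hX1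
    linarith [h0, s1, e1, e1', e2, hs, habs, hkq, hr1, hr2, hX]

end Helpers

/-- Moment inequality: for `p > 0` there is `K̃₁ > 0` (depending only on `p`) such that
for every probability space, every `k > 0` and every real random variable `Y` with the
stated integrability, `E|k+Y|^{1+p} ≤ k^{1+p} + (1+p)k^p E[Y] + K̃₁ E|Y|^{1+p}` when
`p ≤ 1`, and `E|k+Y|^{1+p} ≤ k^{1+p} + (1+p)k^p E[Y] + k^p + K̃₁(E|Y|^{2p} + 1)` when
`p > 1`. -/
theorem stmt9 (p : ℝ) (hp : 0 < p) :
    ∃ K : ℝ, 0 < K ∧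
      ∀ (Ω : Type) [MeasurableSpace Ω] (P : Measure Ω) [IsProbabilityMeasure P]
        (k : ℝ), 0 < k → ∀ Y : Ω → ℝ, Measurable Y →
        (p ≤ 1 → Integrable (fun ω => |Y ω| ^ (1 + p)) P →
          ∫ ω, |k + Y ω| ^ (1 + p) ∂P ≤
            k ^ (1 + p) + (1 + p) * k ^ p * (∫ ω, Y ω ∂P)
              + K * ∫ ω, |Y ω| ^ (1 + p) ∂P) ∧
        (1 < p → Integrable Y P → Integrable (fun ω => |Y ω| ^ (2 * p)) P →
          ∫ ω, |k + Y ω| ^ (1 + p) ∂P ≤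
            k ^ (1 + p) + (1 + p) * k ^ p * (∫ ω, Y ω ∂P) + k ^ p
              + K * ((∫ ω, |Y ω| ^ (2 * p) ∂P) + 1)) := by
  have hC0 : (0:ℝ) < (1+p)*p*2^p := by positivity
  have hC0p : (0:ℝ) < ((1+p)*p*2^p)^p := Real.rpow_pos_of_pos hC0 p
  refine ⟨2*(1+p) + (((1+p)*p*2^p)^p + (1+p)*p*2^p + (2+p)), by linarith, ?_⟩
  intro Ω _ P _ k hk Y hY
  constructor
  · intro hp1 hInt
    have hYint : Integrable Y P := by
      refine ((integrable_const (1:ℝ)).add hInt).mono' hY.aestronglyMeasurable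
        (Filter.Eventually.of_forall fun ω => ?_)
      rw [Real.norm_eq_abs]
      simp only [Pi.add_apply]
      have h := rpow_le_rpow_add_one (abs_nonneg (Y ω)) zero_le_one
        (show (1:ℝ) ≤ 1 + p by linarith)
      rw [Real.rpow_one] at h
      linarith
    have i1 : Integrable (fun ω => k^(1+p) + (1+p)*k^p * Y ω) P :=
      (integrable_const _).add (hYint.const_mul _)
    have i2 : Integrable (fun ω => (k^(1+p) + (1+p)*k^p * Y ω) + 2*(1+p) * |Y ω|^(1+p)) P :=
      i1.add (hInt.const_mul _)
    have hmono := integral_mono_of_nonneg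
      (Filter.Eventually.of_forall fun ω => Real.rpow_nonneg (abs_nonneg _) _)
      i2 (Filter.Eventually.of_forall fun ω => ptwise1 hp hp1 hk)
    rw [integral_add i1 (hInt.const_mul _),
      integral_add (integrable_const _) (hYint.const_mul _),
      integral_const, integral_const_mul, integral_const_mul] at hmono
    simp only [measure_univ, probReal_univ, ENNReal.toReal_one, smul_eq_mul, one_mul] at hmono
    have hI0 : (0:ℝ) ≤ ∫ ω, |Y ω|^(1+p) ∂P :=
      integral_nonneg fun ω => Real.rpow_nonneg (abs_nonneg _) _
    have hrest : (0:ℝ) ≤ (((1+p)*p*2^p)^p + (1+p)*p*2^p + (2+p)) * ∫ ω, |Y ω|^(1+p) ∂P :=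
      mul_nonneg (by linarith) hI0
    linarith
  · intro hp1 hYint hInt2
    have i3 : Integrable (fun ω => |Y ω|^(2*p) + 1) P := hInt2.add (integrable_const 1)
    have i1 : Integrable (fun ω => k^(1+p) + (1+p)*k^p * Y ω) P :=
      (integrable_const _).add (hYint.const_mul _)
    have i2 : Integrable (fun ω => (k^(1+p) + (1+p)*k^p * Y ω) + k^p) P :=
      i1.add (integrable_const _)
    have i4 : Integrable (fun ω => ((k^(1+p) + (1+p)*k^p * Y ω) + k^p) +
        (((1+p)*p*2^p)^p + (1+p)*p*2^p + (2+p)) * (|Y ω|^(2*p) + 1)) P :=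
      i2.add (i3.const_mul _)
    have hmono := integral_mono_of_nonneg
      (Filter.Eventually.of_forall fun ω => Real.rpow_nonneg (abs_nonneg _) _)
      i4 (Filter.Eventually.of_forall fun ω => ptwise2 hp1 hk)
    rw [integral_add i2 (i3.const_mul _), integral_add i1 (integrable_const _),
      integral_add (integrable_const _) (hYint.const_mul _), integral_const, integral_const,
      integral_const_mul, integral_const_mul,
      integral_add hInt2 (integrable_const 1), integral_const] at hmono
    simp only [measure_univ, probReal_univ, ENNReal.toReal_one, smul_eq_mul, one_mul] at hmono
    have hI0 : (0:ℝ) ≤ ∫ ω, |Y ω|^(2*p) ∂P :=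
      integral_nonneg fun ω => Real.rpow_nonneg (abs_nonneg _) _
    have hrest : (0:ℝ) ≤ 2*(1+p) * ((∫ ω, |Y ω|^(2*p) ∂P) + 1) :=
      mul_nonneg (by linarith) (by linarith)
    linarith
end

section
/- Let p > 0 and b > 0. There exists a constant c_{b,p} > 0, depending only on p and b, such that for every a > 0 and every x ∈ ℝ with a + x ≥ 0: if p ≤ 1 then (a+x)^{1+p} − b(a+x)^p ≤ a^{1+p} + (1+p)a^p x − (b/2)a^p + c_{b,p}(|x|^{1+p} + 1), and if p > 1 then (a+x)^{1+p} − b(a+x)^p ≤ a^{1+p} + (1+p)a^p x − (b/2)a^p + a^p + c_{b,p}(|x|^{2p} + 1). -/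
open Real

lemma subadd_rpow' {u v q : ℝ} (hu : 0 ≤ u) (hv : 0 ≤ v) (hq0 : 0 ≤ q) (hq1 : q ≤ 1) :
    (u + v) ^ q ≤ u ^ q + v ^ q := by
  have h := NNReal.rpow_add_le_add_rpow (u.toNNReal) (v.toNNReal) hq0 hq1
  have h2 := (NNReal.coe_le_coe.mpr h)
  push_cast [Real.coe_toNNReal u hu, Real.coe_toNNReal v hv] at h2
  exact h2

lemma tangent_rpow {q u v : ℝ} (hq : 1 ≤ q) (hu : 0 < u) (hv : 0 ≤ v) :
    u ^ q - v ^ q ≤ q * u ^ (q - 1) * (u - v) := by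
  have hs : (-1:ℝ) ≤ v / u - 1 := by
    have : 0 ≤ v / u := div_nonneg hv hu.le
    linarith
  have hB := one_add_mul_self_le_rpow_one_add hs hq
  rw [add_sub_cancel] at hB
  rw [Real.div_rpow hv hu.le] at hB
  have huq : 0 < u ^ q := Real.rpow_pos_of_pos hu q
  have hmul := mul_le_mul_of_nonneg_left hB huq.le
  have hcan : u ^ q * (v ^ q / u ^ q) = v ^ q := by field_simp
  rw [hcan] at hmul
  have h1 : u ^ (q - 1) * u = u ^ q := by
    calc u ^ (q-1) * u = u ^ (q-1) * u ^ (1:ℝ) := by rw [Real.rpow_one]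
    _ = u ^ (q - 1 + 1) := (Real.rpow_add hu _ _).symm
    _ = u ^ q := by ring_nf
  have expand : u ^ q * (1 + q * (v / u - 1)) =
      u ^ q + q * (u ^ (q-1) * v) - q * u ^ q := by
    rw [← h1]; field_simp; ring
  rw [expand] at hmul
  rw [← h1]
  nlinarith [hmul]

lemma rpow_le_rpow_plus_one {y s t : ℝ} (hy : 0 ≤ y) (hst : s ≤ t) (hs : 0 ≤ s) :
    y ^ s ≤ y ^ t + 1 := by
  rcases le_or_gt y 1 with h | h
  · have h1 : y ^ s ≤ 1 := Real.rpow_le_one hy h hs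
    have h2 : 0 ≤ y ^ t := Real.rpow_nonneg hy t
    linarith
  · have : y ^ s ≤ y ^ t := Real.rpow_le_rpow_of_exponent_le h.le hst
    linarith

set_option maxHeartbeats 1000000 in
/-- Drift power inequality: for `p, b > 0` there is `c_{b,p} > 0` such that for all `a > 0`
and `x ∈ ℝ` with `a + x ≥ 0`,
`(a+x)^{1+p} − b(a+x)^p ≤ a^{1+p} + (1+p)a^p x − (b/2)a^p + c_{b,p}(|x|^{1+p}+1)` when
`p ≤ 1`, and
`(a+x)^{1+p} − b(a+x)^p ≤ a^{1+p} + (1+p)a^p x − (b/2)a^p + a^p + c_{b,p}(|x|^{2p}+1)`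
when `p > 1`. -/
theorem stmt10 (p b : ℝ) (hp : 0 < p) (hb : 0 < b) :
    ∃ c : ℝ, 0 < c ∧ ∀ a x : ℝ, 0 < a → 0 ≤ a + x →
      (p ≤ 1 →
        (a + x) ^ (1 + p) - b * (a + x) ^ p ≤
          a ^ (1 + p) + (1 + p) * a ^ p * x - b / 2 * a ^ p + c * (|x| ^ (1 + p) + 1)) ∧
      (1 < p →
        (a + x) ^ (1 + p) - b * (a + x) ^ p ≤
          a ^ (1 + p) + (1 + p) * a ^ p * x - b / 2 * a ^ p + a ^ p
            + c * (|x| ^ (2 * p) + 1)) := by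
  obtain ⟨d, hd_def⟩ : ∃ d : ℝ, d = (2:ℝ) ^ (-(1/p)) := ⟨_, rfl⟩
  have hd0 : 0 < d := by rw [hd_def]; exact Real.rpow_pos_of_pos two_pos _
  have hd1 : d < 1 := by
    rw [hd_def]
    apply Real.rpow_lt_one_of_one_lt_of_neg one_lt_two
    have : 0 < 1/p := by positivity
    linarith
  have hdp : d ^ p = 1/2 := by
    rw [hd_def, ← Real.rpow_mul (by norm_num : (0:ℝ) ≤ 2)]
    have he : -(1/p) * p = -1 := by field_simp
    rw [he, show (-1:ℝ) = ((-1:ℤ):ℝ) by norm_num, Real.rpow_intCast]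
    norm_num
  obtain ⟨δ, hδ_def⟩ : ∃ δ : ℝ, δ = 1 - d := ⟨_, rfl⟩
  have hδ0 : 0 < δ := by rw [hδ_def]; linarith
  have hδ1 : δ < 1 := by rw [hδ_def]; linarith
  obtain ⟨K, hK_def⟩ : ∃ K : ℝ, K = (1+p) * p * (2:ℝ) ^ (p-1) := ⟨_, rfl⟩
  have hK0 : 0 < K := by
    rw [hK_def]
    have h2 : (0:ℝ) < (2:ℝ) ^ (p-1) := Real.rpow_pos_of_pos two_pos _
    have h1p : (0:ℝ) < 1 + p := by linarith
    positivity
  have hδinv : (0:ℝ) ≤ 1 + 1/δ := by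
    have := one_div_pos.mpr hδ0; linarith
  obtain ⟨M, hM_def⟩ : ∃ M : ℝ, M = (1 + 1/δ) ^ (1+p) := ⟨_, rfl⟩
  have hM0 : 0 < M := by rw [hM_def]; exact Real.rpow_pos_of_pos (by nlinarith [one_div_pos.mpr hδ0]) _
  have hδp0 : 0 < δ ^ (-p) := Real.rpow_pos_of_pos hδ0 _
  have hKp0 : 0 < K ^ p := Real.rpow_pos_of_pos hK0 _
  have n1 : (0:ℝ) ≤ (1+p) * δ ^ (-p) := mul_nonneg (by linarith) hδp0.le
  have n2 : (0:ℝ) ≤ b/2 * δ ^ (-p) := mul_nonneg (by linarith) hδp0.le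
  obtain ⟨c, hc_def⟩ : ∃ c : ℝ,
      c = 2 + b/2 + (K ^ p + 1) + (M + (1+p) * δ ^ (-p) + b/2 * δ ^ (-p)) := ⟨_, rfl⟩
  refine ⟨c, by rw [hc_def]; linarith [hKp0, hM0], fun a x ha hax => ?_⟩
  have hap : 0 < a ^ p := Real.rpow_pos_of_pos ha _
  have ha1p : 0 < a ^ (1+p) := Real.rpow_pos_of_pos ha _
  have haxp : 0 ≤ (a + x) ^ p := Real.rpow_nonneg hax _
  have hxabs : (0:ℝ) ≤ |x| := abs_nonneg x
  -- common: Taylor-type bound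
  have hT : (a+x) ^ (1+p) - a ^ (1+p) - (1+p) * a ^ p * x ≤
      (1+p) * (((a+x) ^ p - a ^ p) * x) := by
    rcases eq_or_lt_of_le hax with h0 | h0
    · have hx : x = -a := by linarith
      have hz : ((0:ℝ)) ^ (1+p) = 0 := Real.zero_rpow (by linarith)
      have hz2 : ((0:ℝ)) ^ p = 0 := Real.zero_rpow hp.ne'
      rw [← h0, hz, hz2, hx]
      linarith [ha1p.le]
    · have htan := tangent_rpow (q := 1+p) (u := a+x) (v := a)
        (by linarith) h0 ha.le
      have he : (1 + p) - 1 = p := by ring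
      rw [he, show (a+x) - a = x by ring] at htan
      linarith [htan]
  constructor
  · -- case p ≤ 1
    intro hp1
    have hsub : ((a+x) ^ p - a ^ p) * x ≤ |x| ^ p * |x| := by
      rcases le_or_gt 0 x with hx | hx
      · rw [abs_of_nonneg hx]
        have h1 : (a+x) ^ p ≤ a ^ p + x ^ p := subadd_rpow' ha.le hx hp.le hp1
        exact mul_le_mul_of_nonneg_right (by linarith) hx
      · rw [abs_of_neg hx]
        have h1 : a ^ p ≤ (a+x) ^ p + (-x) ^ p := by
          have heq : a = (a + x) + (-x) := by ring
          calc a ^ p = ((a+x) + (-x)) ^ p := by rw [← heq]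
          _ ≤ (a+x) ^ p + (-x) ^ p :=
            subadd_rpow' (v := -x) hax (by linarith) hp.le hp1
        have h4 : -((-x) ^ p) ≤ (a+x) ^ p - a ^ p := by linarith
        have h5 := mul_le_mul_of_nonpos_right h4 hx.le
        linarith [h5]
    have hxx : |x| ^ p * |x| = |x| ^ (1+p) := by
      rw [Real.rpow_add' hxabs (by linarith : (1:ℝ) + p ≠ 0), Real.rpow_one]
      ring
    rw [hxx] at hsub
    have habs1p : 0 ≤ |x| ^ (1+p) := Real.rpow_nonneg hxabs _
    have habsp : 0 ≤ |x| ^ p := Real.rpow_nonneg hxabs _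
    have f2 : (1+p) * (((a+x) ^ p - a ^ p) * x) ≤ (1+p) * |x| ^ (1+p) :=
      mul_le_mul_of_nonneg_left hsub (by linarith)
    have f3 : (1+p) * |x| ^ (1+p) ≤ 2 * |x| ^ (1+p) := by
      have := mul_le_mul_of_nonneg_right (show (1:ℝ)+p ≤ 2 by linarith) habs1p
      linarith
    -- b part
    have hbp : a ^ p ≤ (a+x) ^ p + |x| ^ p := by
      have h1 : a ≤ (a+x) + |x| := by
        have := neg_abs_le x; linarith
      calc a ^ p ≤ ((a+x) + |x|) ^ p := Real.rpow_le_rpow ha.le h1 hp.le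
      _ ≤ (a+x) ^ p + |x| ^ p := subadd_rpow' hax hxabs hp.le hp1
    have f4 : b/2 * a ^ p ≤ b/2 * ((a+x) ^ p + |x| ^ p) :=
      mul_le_mul_of_nonneg_left hbp (by linarith)
    have hxp1 : |x| ^ p ≤ |x| ^ (1+p) + 1 :=
      rpow_le_rpow_plus_one hxabs (by linarith) hp.le
    have f5 : b/2 * |x| ^ p ≤ b/2 * (|x| ^ (1+p) + 1) :=
      mul_le_mul_of_nonneg_left hxp1 (by linarith)
    have hcge : 2 + b/2 ≤ c := by
      rw [hc_def]; linarith [hKp0, hM0, n1, n2]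
    have f6 : (2 + b/2) * (|x| ^ (1+p) + 1) ≤ c * (|x| ^ (1+p) + 1) :=
      mul_le_mul_of_nonneg_right hcge (by linarith)
    have f7 : 0 ≤ b/2 * (a+x) ^ p := mul_nonneg (by linarith) haxp
    linarith only [hT, f2, f3, f4, f5, f6, f7, haxp, hb]
  · -- case 1 < p
    intro hp1
    have h2p : |x| ^ (2*p) = (x^2) ^ p := by
      have h2 : x ^ 2 = |x| ^ (2:ℝ) := by
        rw [show (2:ℝ) = ((2:ℕ):ℝ) by norm_num, Real.rpow_natCast, sq_abs]
      rw [h2, ← Real.rpow_mul hxabs]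
    have h2p0 : 0 ≤ |x| ^ (2*p) := Real.rpow_nonneg hxabs _
    rcases le_or_gt |x| (δ * a) with hnear | hfar
    · -- near case
      rw [hδ_def] at hnear
      have hda : 0 ≤ d * a := mul_nonneg hd0.le ha.le
      have hax_low : d * a ≤ a + x := by
        have h := neg_abs_le x
        nlinarith [hnear]
      have hax_hi : a + x ≤ 2 * a := by
        have h := le_abs_self x
        nlinarith [hnear, hda]
      have haxpos : 0 < a + x := lt_of_lt_of_le (by positivity) hax_low
      have hhalf : (1/2) * a ^ p ≤ (a+x) ^ p := by
        have h1 : (d * a) ^ p ≤ (a+x) ^ p :=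
          Real.rpow_le_rpow hda hax_low hp.le
        rw [Real.mul_rpow hd0.le ha.le, hdp] at h1
        linarith
      have hTT : ((a+x) ^ p - a ^ p) * x ≤ p * (2*a) ^ (p-1) * x^2 := by
        rcases le_or_gt 0 x with hx | hx
        · have htan := tangent_rpow (q := p) (u := a+x) (v := a) hp1.le haxpos ha.le
          rw [show (a+x) - a = x by ring] at htan
          have h4 : (a+x) ^ (p-1) ≤ (2*a) ^ (p-1) :=
            Real.rpow_le_rpow haxpos.le hax_hi (by linarith)
          have s1 := mul_le_mul_of_nonneg_right htan hx
          have s2 := mul_le_mul_of_nonneg_left h4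
            (show (0:ℝ) ≤ p * x^2 by positivity)
          nlinarith [s1, s2]
        · have htan := tangent_rpow (q := p) (u := a) (v := a+x) hp1.le ha hax
          rw [show a - (a+x) = -x by ring] at htan
          have h4 : a ^ (p-1) ≤ (2*a) ^ (p-1) :=
            Real.rpow_le_rpow ha.le (by linarith) (by linarith)
          have s1 := mul_le_mul_of_nonneg_right htan (by linarith : (0:ℝ) ≤ -x)
          have s2 := mul_le_mul_of_nonneg_left h4
            (show (0:ℝ) ≤ p * x^2 by positivity)
          nlinarith [s1, s2]
      have h2arw : (2*a) ^ (p-1) = (2:ℝ) ^ (p-1) * a ^ (p-1) :=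
        Real.mul_rpow (by norm_num) ha.le
      -- Young's inequality
      have hpne : p ≠ 0 := hp.ne'
      have hp1ne : p - 1 ≠ 0 := by linarith
      have hconj : (p/(p-1)).HolderConjugate p :=
        ((Real.holderConjugate_iff_eq_conjExponent hp1).2 rfl).symm
      have hY := Real.young_inequality_of_nonneg
        (Real.rpow_nonneg ha.le (p-1)) (by positivity : (0:ℝ) ≤ K * x^2) hconj
      have hYl : (a ^ (p-1)) ^ (p/(p-1)) = a ^ p := by
        rw [← Real.rpow_mul ha.le]
        congr 1
        field_simp
      have hYr : (K * x^2) ^ p = K ^ p * (x^2) ^ p :=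
        Real.mul_rpow hK0.le (by positivity)
      rw [hYl, hYr] at hY
      have hPge1 : (1:ℝ) ≤ p/(p-1) := by
        rw [le_div_iff₀ (by linarith : (0:ℝ) < p - 1)]; linarith
      have hx2p0 : 0 ≤ (x^2) ^ p := Real.rpow_nonneg (by positivity) _
      have hdiv1 : a ^ p / (p/(p-1)) ≤ a ^ p := div_le_self hap.le hPge1
      have hdiv2 : K ^ p * (x^2) ^ p / p ≤ K ^ p * (x^2) ^ p :=
        div_le_self (by positivity) (by linarith)
      have hYoung : K * (a ^ (p-1) * x^2) ≤ a ^ p + K ^ p * (x^2) ^ p := by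
        nlinarith [hY, hdiv1, hdiv2]
      have h1 : (1+p) * (((a+x) ^ p - a ^ p) * x) ≤
          (1+p) * (p * (2*a) ^ (p-1) * x^2) :=
        mul_le_mul_of_nonneg_left hTT (by linarith)
      have h2 : (1+p) * (p * (2*a) ^ (p-1) * x^2) = K * (a ^ (p-1) * x^2) := by
        rw [h2arw, hK_def]; ring
      have hTfull : (a+x) ^ (1+p) - a ^ (1+p) - (1+p) * a ^ p * x ≤
          a ^ p + K ^ p * (x^2) ^ p := by
        linarith [hT, hYoung, h1, h2.le, h2.ge]
      rw [← h2p] at hTfull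
      have hcge : K ^ p ≤ c := by
        rw [hc_def]; linarith [hM0, n1, n2]
      have e4 : K ^ p * (|x| ^ (2*p) + 1) ≤ c * (|x| ^ (2*p) + 1) :=
        mul_le_mul_of_nonneg_right hcge (by linarith)
      have hb2 : b * ((1/2) * a ^ p) ≤ b * (a+x) ^ p :=
        mul_le_mul_of_nonneg_left hhalf hb.le
      linarith only [hTfull, e4, hb2, hKp0.le, h2p0]
    · -- far case : δ * a < |x|
      have hax_le : a + x ≤ (1 + 1/δ) * |x| := by
        have h1 : a ≤ |x| / δ := by
          rw [le_div_iff₀ hδ0]; nlinarith [hfar]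
        have h2 := le_abs_self x
        have h3 : |x|/δ = 1/δ * |x| := by ring
        nlinarith [h1, h2, h3.le, h3.ge]
      have hxx : |x| ^ p * |x| = |x| ^ (1+p) := by
        rw [Real.rpow_add' hxabs (by linarith : (1:ℝ) + p ≠ 0), Real.rpow_one]
        ring
      have h1 : (a+x) ^ (1+p) ≤ M * |x| ^ (1+p) := by
        calc (a+x) ^ (1+p) ≤ ((1 + 1/δ) * |x|) ^ (1+p) :=
          Real.rpow_le_rpow hax hax_le (by linarith)
        _ = (1 + 1/δ) ^ (1+p) * |x| ^ (1+p) := Real.mul_rpow hδinv hxabs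
        _ = M * |x| ^ (1+p) := by rw [hM_def]
      have hapb : a ^ p ≤ δ ^ (-p) * |x| ^ p := by
        have ha2 : a ≤ |x| / δ := by
          rw [le_div_iff₀ hδ0]; nlinarith [hfar]
        calc a ^ p ≤ (|x| / δ) ^ p := Real.rpow_le_rpow ha.le ha2 hp.le
        _ = |x| ^ p / δ ^ p := Real.div_rpow hxabs hδ0.le p
        _ = δ ^ (-p) * |x| ^ p := by
            rw [Real.rpow_neg hδ0.le]; ring
      have hx1p : |x| ^ (1+p) ≤ |x| ^ (2*p) + 1 :=
        rpow_le_rpow_plus_one hxabs (by linarith) (by linarith)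
      have hxp : |x| ^ p ≤ |x| ^ (2*p) + 1 :=
        rpow_le_rpow_plus_one hxabs (by linarith) hp.le
      have hx1p0 : 0 ≤ |x| ^ (1+p) := Real.rpow_nonneg hxabs _
      have hxp0 : 0 ≤ |x| ^ p := Real.rpow_nonneg hxabs _
      have h3 : -((1+p) * a ^ p * x) ≤ (1+p) * (δ ^ (-p) * |x| ^ (1+p)) := by
        have h31 : -x ≤ |x| := neg_le_abs x
        have h32 : a ^ p * (-x) ≤ a ^ p * |x| :=
          mul_le_mul_of_nonneg_left h31 hap.le
        have h33 : a ^ p * |x| ≤ (δ ^ (-p) * |x| ^ p) * |x| :=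
          mul_le_mul_of_nonneg_right hapb hxabs
        have h35 : a ^ p * (-x) ≤ δ ^ (-p) * |x| ^ (1+p) := by
          rw [← hxx]; linarith only [h32, h33]
        have := mul_le_mul_of_nonneg_left h35 (show (0:ℝ) ≤ 1+p by linarith)
        linarith [this]
      have hcge : M + (1+p) * δ ^ (-p) + b/2 * δ ^ (-p) ≤ c := by
        rw [hc_def]; linarith [hKp0, hb]
      have e1 : M * |x| ^ (1+p) ≤ M * (|x| ^ (2*p) + 1) :=
        mul_le_mul_of_nonneg_left hx1p hM0.le
      have e2 : (1+p) * (δ ^ (-p) * |x| ^ (1+p)) ≤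
          (1+p) * δ ^ (-p) * (|x| ^ (2*p) + 1) := by
        have := mul_le_mul_of_nonneg_left hx1p hδp0.le
        have h2 := mul_le_mul_of_nonneg_left this (show (0:ℝ) ≤ 1+p by linarith)
        linarith only [h2]
      have e3 : b/2 * a ^ p ≤ b/2 * δ ^ (-p) * (|x| ^ (2*p) + 1) := by
        have t1 := mul_le_mul_of_nonneg_left hapb (show (0:ℝ) ≤ b/2 by linarith)
        have t2 := mul_le_mul_of_nonneg_left hxp n2
        linarith only [t1, t2]
      have e4 : (M + (1+p) * δ ^ (-p) + b/2 * δ ^ (-p)) * (|x| ^ (2*p) + 1) ≤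
          c * (|x| ^ (2*p) + 1) :=
        mul_le_mul_of_nonneg_right hcge (by linarith)
      have hbax : 0 ≤ b * (a+x) ^ p := mul_nonneg hb.le haxp
      linarith only [h1, h3, e1, e2, e3, e4, hbax, ha1p.le, hap.le]
end

section
/- Define c_i for 1 ≤ i ≤ n by choosing any c_1 > 0 and setting c_i := c_1 Π_{k=2}^{i} (a_{k−1,k}/a_{k,k−1}), and define U(x) := 1 + Σ_{i=1}^{n} c_i x_i. Set α := min_{2 ≤ i ≤ n} a_{i0}, β := α + sup_{x_1 > 0} (c_1 x_1(a_{10} − a_{11}x_1) + α c_1 x_1) (this supremum is finite since a_{11} > 0), and γ := max_{1 ≤ i ≤ n} σ_i². Then for every x ∈ ℝ_+^n one has Σ_{i=1}^{n} c_i x_i F_i(x) ≤ −α U(x) + β and Σ_{i=1}^{n} σ_i² c_i² x_i² ≤ γ U(x)². (Since U is affine, the left-hand sides are respectively LU(x) and Γ_L(U)(x) for the generator Lg(x) = Σ_i x_iF_i(x)∂g/∂x_i + ½Σ_i σ_i²x_i²∂²g/∂x_i² and carré du champ Γ_L(g)(x) = Σ_i σ_i²x_i²(∂g/∂x_i)².)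 -/
/-- The drift field `F` of the Lotka–Volterra food chain (components indexed by `1 ≤ i ≤ n`). -/
def Fdrift (n : ℕ) (a : ℕ → ℕ → ℝ) (x : ℕ → ℝ) (i : ℕ) : ℝ :=
  if i = 1 then a 1 0 - a 1 1 * x 1 - a 1 2 * x 2
  else if i = n then -a n 0 + a n (n - 1) * x (n - 1) - a n n * x n
  else -a i 0 + a i (i - 1) * x (i - 1) - a i i * x i - a i (i + 1) * x (i + 1)

/-- The affine Lyapunov function `U(x) = 1 + Σ c_i x_i` satisfies
`LU ≤ −αU + β` and `Γ_L(U) ≤ γU²` on `ℝ_+^n`, where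
`α = min_{2≤i≤n} a_{i0}`, `β = α + sup_{x₁>0}(c₁x₁(a_{10}−a_{11}x₁)+αc₁x₁)` and
`γ = max_i σ_i²`. Since `U` is affine, `LU(x) = Σ c_i x_i F_i(x)` and
`Γ_L(U)(x) = Σ σ_i² c_i² x_i²`. -/
theorem stmt11 (n : ℕ) (hn : 2 ≤ n) (a : ℕ → ℕ → ℝ) (σ : ℕ → ℝ)
    (h10 : 0 < a 1 0)
    (hi0 : ∀ i, 2 ≤ i → i ≤ n → 0 < a i 0)
    (h11 : 0 < a 1 1)
    (hii : ∀ i, 2 ≤ i → i ≤ n → 0 ≤ a i i)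
    (hlow : ∀ i, 2 ≤ i → i ≤ n → 0 < a i (i - 1))
    (hup : ∀ i, 1 ≤ i → i ≤ n - 1 → 0 < a i (i + 1))
    (c : ℕ → ℝ) (hc1 : 0 < c 1)
    (hc : ∀ i, 2 ≤ i → i ≤ n →
      c i = c 1 * ∏ k ∈ Finset.Icc 2 i, a (k - 1) k / a k (k - 1))
    (U : (ℕ → ℝ) → ℝ) (hU : ∀ x, U x = 1 + ∑ i ∈ Finset.Icc 1 n, c i * x i)
    (α β γ : ℝ)
    (hα : α = (Finset.Icc 2 n).inf' (Finset.nonempty_Icc.mpr hn) (fun i => a i 0))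
    (hβ : β = α + sSup ((fun x1 : ℝ =>
      c 1 * x1 * (a 1 0 - a 1 1 * x1) + α * (c 1 * x1)) '' Set.Ioi 0))
    (hγ : γ = (Finset.Icc 1 n).sup' (Finset.nonempty_Icc.mpr (by omega)) (fun i => σ i ^ 2)) :
    ∀ x : ℕ → ℝ, (∀ i, 1 ≤ i → i ≤ n → 0 ≤ x i) →
      (∑ i ∈ Finset.Icc 1 n, c i * x i * Fdrift n a x i ≤ -α * U x + β) ∧
      (∑ i ∈ Finset.Icc 1 n, σ i ^ 2 * c i ^ 2 * x i ^ 2 ≤ γ * U x ^ 2) := by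
  -- positivity of the `c i`
  have hcpos : ∀ i, 1 ≤ i → i ≤ n → 0 < c i := by
    intro i h1 h2
    rcases Nat.lt_or_ge i 2 with hi | hi
    · have : i = 1 := by omega
      rw [this]; exact hc1
    · rw [hc i hi h2]
      apply mul_pos hc1
      apply Finset.prod_pos
      intro k hk
      obtain ⟨hk1, hk2⟩ := Finset.mem_Icc.mp hk
      have h1 : 0 < a (k - 1) k := by
        have := hup (k - 1) (by omega) (by omega)
        have hkk : k - 1 + 1 = k := by omega
        rwa [hkk] at this
      exact div_pos h1 (hlow k hk1 (by omega))
  -- key recursion: c i * a i (i-1) = c (i-1) * a (i-1) i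
  have hrel : ∀ i, 2 ≤ i → i ≤ n → c i * a i (i - 1) = c (i - 1) * a (i - 1) i := by
    intro i h2 hin
    have hla : (0:ℝ) < a i (i - 1) := hlow i h2 hin
    rcases Nat.lt_or_ge i 3 with hi3 | hi3
    · have hi2 : i = 2 := by omega
      subst hi2
      rw [hc 2 le_rfl hin]
      norm_num
      field_simp
    · have hi1 : i - 1 + 1 = i := by omega
      have key : c i = c (i - 1) * (a (i - 1) i / a i (i - 1)) := by
        rw [hc i h2 hin, hc (i - 1) (by omega) (by omega)]
        have : Finset.Icc 2 i = insert i (Finset.Icc 2 (i - 1)) := by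
          ext j; simp only [Finset.mem_Icc, Finset.mem_insert]; omega
        rw [this, Finset.prod_insert (by simp [Finset.mem_Icc]; omega)]
        ring
      rw [key]
      field_simp
  -- bounds from α and γ
  have hα_le : ∀ i, 2 ≤ i → i ≤ n → α ≤ a i 0 := by
    intro i h2 hin
    rw [hα]
    exact Finset.inf'_le _ (Finset.mem_Icc.mpr ⟨h2, hin⟩)
  have hα_pos : 0 < α := by
    rw [hα, Finset.lt_inf'_iff]
    intro i hi
    obtain ⟨h2, hin⟩ := Finset.mem_Icc.mp hi
    exact hi0 i h2 hin
  have hγ_le : ∀ i, 1 ≤ i → i ≤ n → σ i ^ 2 ≤ γ := by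
    intro i h1 hin
    rw [hγ]
    exact Finset.le_sup' (fun i => σ i ^ 2) (Finset.mem_Icc.mpr ⟨h1, hin⟩)
  have hγ_nonneg : 0 ≤ γ := le_trans (sq_nonneg (σ 1)) (hγ_le 1 le_rfl (by omega))
  -- the supremum
  have hA : 0 < c 1 * a 1 1 := mul_pos hc1 h11
  have hAne : c 1 * a 1 1 ≠ 0 := ne_of_gt hA
  have hb : 0 < c 1 * (a 1 0 + α) := mul_pos hc1 (by linarith)
  have hub : ∀ t : ℝ, c 1 * t * (a 1 0 - a 1 1 * t) + α * (c 1 * t)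
      ≤ (c 1 * (a 1 0 + α)) ^ 2 / (4 * (c 1 * a 1 1)) := by
    intro t
    rw [le_div_iff₀ (by linarith)]
    nlinarith [sq_nonneg (c 1 * (a 1 0 + α) - 2 * (c 1 * a 1 1) * t)]
  have hmem : (c 1 * (a 1 0 + α)) ^ 2 / (4 * (c 1 * a 1 1)) ∈
      ((fun x1 : ℝ => c 1 * x1 * (a 1 0 - a 1 1 * x1) + α * (c 1 * x1)) '' Set.Ioi 0) := by
    refine ⟨(c 1 * (a 1 0 + α)) / (2 * (c 1 * a 1 1)), Set.mem_Ioi.mpr ?_, ?_⟩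
    · exact div_pos hb (by linarith)
    · have hc1' : c 1 ≠ 0 := ne_of_gt hc1
      have h11' : a 1 1 ≠ 0 := ne_of_gt h11
      field_simp
      ring
  have hβM : β = α + (c 1 * (a 1 0 + α)) ^ 2 / (4 * (c 1 * a 1 1)) := by
    rw [hβ]
    congr 1
    have hbdd : ∀ y ∈ ((fun x1 : ℝ =>
        c 1 * x1 * (a 1 0 - a 1 1 * x1) + α * (c 1 * x1)) '' Set.Ioi 0),
        y ≤ (c 1 * (a 1 0 + α)) ^ 2 / (4 * (c 1 * a 1 1)) := by
      rintro y ⟨t, _, rfl⟩; exact hub t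
    exact le_antisymm (csSup_le ⟨_, hmem⟩ hbdd)
      (le_csSup ⟨(c 1 * (a 1 0 + α)) ^ 2 / (4 * (c 1 * a 1 1)), hbdd⟩ hmem)
  -- set decompositions
  have hs1 : Finset.Icc 1 n = insert 1 (Finset.Icc 2 n) := by
    ext j; simp only [Finset.mem_Icc, Finset.mem_insert]; omega
  have hns1 : (1 : ℕ) ∉ Finset.Icc 2 n := by simp
  have hs2 : Finset.Icc 1 (n - 1) = insert 1 (Finset.Icc 2 (n - 1)) := by
    ext j; simp only [Finset.mem_Icc, Finset.mem_insert]; omega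
  have hns2 : (1 : ℕ) ∉ Finset.Icc 2 (n - 1) := by simp
  have hs3 : Finset.Icc 2 n = insert n (Finset.Icc 2 (n - 1)) := by
    ext j; simp only [Finset.mem_Icc, Finset.mem_insert]; omega
  have hns3 : n ∉ Finset.Icc 2 (n - 1) := by simp [Finset.mem_Icc]; omega
  intro x hx
  have hxnn : ∀ i, 1 ≤ i → i ≤ n → 0 ≤ x i := hx
  constructor
  · -- first inequality
    -- termwise identity on Icc 2 n
    have hterm : ∀ i ∈ Finset.Icc 2 n,
        c i * x i * Fdrift n a x i
          = (-(c i * a i 0 * x i) - c i * a i i * x i ^ 2)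
            + c (i - 1) * a (i - 1) i * x (i - 1) * x i
            - (if i = n then 0 else c i * a i (i + 1) * x i * x (i + 1)) := by
      intro i hi
      obtain ⟨h2i, hin⟩ := Finset.mem_Icc.mp hi
      have hi1 : i ≠ 1 := by omega
      have hrel' := hrel i h2i hin
      by_cases hin' : i = n
      · subst hin'
        simp only [Fdrift, if_neg hi1, eq_self_iff_true, if_true]
        linear_combination x (i - 1) * x i * hrel'
      · simp only [Fdrift, if_neg hi1, if_neg hin']
        linear_combination x (i - 1) * x i * hrel'
    have hfirst : c 1 * x 1 * Fdrift n a x 1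
        = (c 1 * x 1 * (a 1 0 - a 1 1 * x 1) + α * (c 1 * x 1)) - α * (c 1 * x 1)
          - c 1 * a 1 2 * x 1 * x 2 := by
      simp only [Fdrift, eq_self_iff_true, if_true]
      ring
    -- the telescoping cross sums
    have hcross1 : ∑ i ∈ Finset.Icc 2 n, c (i - 1) * a (i - 1) i * x (i - 1) * x i
        = ∑ j ∈ Finset.Icc 1 (n - 1), c j * a j (j + 1) * x j * x (j + 1) := by
      have hmap : (Finset.Icc 1 (n - 1)).map (addRightEmbedding 1)
          = Finset.Icc 2 n := by
        rw [Finset.map_add_right_Icc]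
        congr 1
        omega
      rw [← hmap, Finset.sum_map]
      apply Finset.sum_congr rfl
      intro j hj
      simp only [addRightEmbedding_apply, Nat.add_sub_cancel]
    have hcross2 : ∑ i ∈ Finset.Icc 2 n,
          (if i = n then (0:ℝ) else c i * a i (i + 1) * x i * x (i + 1))
        = ∑ j ∈ Finset.Icc 2 (n - 1), c j * a j (j + 1) * x j * x (j + 1) := by
      rw [hs3, Finset.sum_insert hns3, if_pos rfl, zero_add]
      apply Finset.sum_congr rfl
      intro j hj
      obtain ⟨hj1, hj2⟩ := Finset.mem_Icc.mp hj
      rw [if_neg (by omega)]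
    have hcross : ∑ i ∈ Finset.Icc 2 n, c (i - 1) * a (i - 1) i * x (i - 1) * x i
          - ∑ i ∈ Finset.Icc 2 n,
            (if i = n then (0:ℝ) else c i * a i (i + 1) * x i * x (i + 1))
        = c 1 * a 1 2 * x 1 * x 2 := by
      rw [hcross1, hcross2, hs2, Finset.sum_insert hns2]
      norm_num
    -- main bound on Icc 2 n
    have hmain : ∀ i ∈ Finset.Icc 2 n,
        (-(c i * a i 0 * x i) - c i * a i i * x i ^ 2) ≤ -α * (c i * x i) := by
      intro i hi
      obtain ⟨h2i, hin⟩ := Finset.mem_Icc.mp hi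
      have hxi := hxnn i (by omega) hin
      have hci := (hcpos i (by omega) hin).le
      have h1 := hα_le i h2i hin
      have h2 := hii i h2i hin
      nlinarith [mul_nonneg hci hxi, mul_nonneg (mul_nonneg hci hxi) hxi]
    -- assemble
    have hsum : ∑ i ∈ Finset.Icc 1 n, c i * x i * Fdrift n a x i
        = (c 1 * x 1 * (a 1 0 - a 1 1 * x 1) + α * (c 1 * x 1)) - α * (c 1 * x 1)
          + ∑ i ∈ Finset.Icc 2 n, (-(c i * a i 0 * x i) - c i * a i i * x i ^ 2) := by
      rw [hs1, Finset.sum_insert hns1, Finset.sum_congr rfl hterm, hfirst,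
        Finset.sum_sub_distrib, Finset.sum_add_distrib]
      linear_combination hcross
    have hsum2 : ∑ i ∈ Finset.Icc 2 n, (-(c i * a i 0 * x i) - c i * a i i * x i ^ 2)
        ≤ -α * ∑ i ∈ Finset.Icc 2 n, c i * x i := by
      rw [Finset.mul_sum]
      exact le_of_le_of_eq (Finset.sum_le_sum hmain)
        (Finset.sum_congr rfl (fun i _ => by ring))
    have hUx : U x = 1 + c 1 * x 1 + ∑ i ∈ Finset.Icc 2 n, c i * x i := by
      rw [hU, hs1, Finset.sum_insert hns1]
      ring
    rw [hsum, hβM, hUx]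
    have h1 := hub (x 1)
    linarith
  · -- second inequality
    have h1 : ∑ i ∈ Finset.Icc 1 n, σ i ^ 2 * c i ^ 2 * x i ^ 2
        ≤ γ * ∑ i ∈ Finset.Icc 1 n, (c i * x i) ^ 2 := by
      rw [Finset.mul_sum]
      apply Finset.sum_le_sum
      intro i hi
      obtain ⟨h1i, hin⟩ := Finset.mem_Icc.mp hi
      have := hγ_le i h1i hin
      have h2 : (0:ℝ) ≤ (c i * x i) ^ 2 := sq_nonneg _
      calc σ i ^ 2 * c i ^ 2 * x i ^ 2 = σ i ^ 2 * (c i * x i) ^ 2 := by ring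
        _ ≤ γ * (c i * x i) ^ 2 := by nlinarith
    have h2 : ∑ i ∈ Finset.Icc 1 n, (c i * x i) ^ 2
        ≤ (∑ i ∈ Finset.Icc 1 n, c i * x i) ^ 2 := by
      apply Finset.sum_sq_le_sq_sum_of_nonneg
      intro i hi
      obtain ⟨h1i, hin⟩ := Finset.mem_Icc.mp hi
      exact mul_nonneg (hcpos i h1i hin).le (hxnn i h1i hin)
    have hsnn : 0 ≤ ∑ i ∈ Finset.Icc 1 n, c i * x i := by
      apply Finset.sum_nonneg
      intro i hi
      obtain ⟨h1i, hin⟩ := Finset.mem_Icc.mp hi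
      exact mul_nonneg (hcpos i h1i hin).le (hxnn i h1i hin)
    rw [hU]
    calc ∑ i ∈ Finset.Icc 1 n, σ i ^ 2 * c i ^ 2 * x i ^ 2
        ≤ γ * ∑ i ∈ Finset.Icc 1 n, (c i * x i) ^ 2 := h1
      _ ≤ γ * (∑ i ∈ Finset.Icc 1 n, c i * x i) ^ 2 := by
          apply mul_le_mul_of_nonneg_left h2 hγ_nonneg
      _ ≤ γ * (1 + ∑ i ∈ Finset.Icc 1 n, c i * x i) ^ 2 := by
          apply mul_le_mul_of_nonneg_left _ hγ_nonneg
          nlinarith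
end

section
/- Let U : ℝ^n → ℝ be a C² function with U(x) ≥ 1 for all x ∈ ℝ_+^n, and suppose there are constants α, β > 0 and γ > 0 such that LU(x) ≤ −αU(x) + β and Γ_L(U)(x) ≤ γU(x)² for all x ∈ ℝ_+^n. Let q₀ := 1 + 2α/γ (the unique q₀ > 1 with −α + (q₀−1)γ/2 = 0). Then for every q with 1 < q < q₀ there exist constants k_{1q}, k_{2q} > 0 such that L(U^q)(x) ≤ k_{1q} − k_{2q} U^q(x) for all x ∈ ℝ_+^n. -/
/-- Partial derivative `∂g/∂x_i(x)`. -/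
noncomputable def pd {n : ℕ} (g : (Fin n → ℝ) → ℝ) (i : Fin n) (x : Fin n → ℝ) : ℝ :=
  fderiv ℝ g x (Pi.single i 1)

/-- Second partial derivative `∂²g/∂x_i²(x)`. -/
noncomputable def pd2 {n : ℕ} (g : (Fin n → ℝ) → ℝ) (i : Fin n) (x : Fin n → ℝ) : ℝ :=
  fderiv ℝ (fun y => fderiv ℝ g y (Pi.single i 1)) x (Pi.single i 1)

/-- The generator `Lg(x) = Σ_i x_iF_i(x)∂g/∂x_i(x) + ½Σ_i σ_i²x_i²∂²g/∂x_i²(x)`. -/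
noncomputable def Lgen {n : ℕ} (F : Fin n → (Fin n → ℝ) → ℝ) (σ : Fin n → ℝ)
    (g : (Fin n → ℝ) → ℝ) (x : Fin n → ℝ) : ℝ :=
  ∑ i, x i * F i x * pd g i x + (1 / 2) * ∑ i, σ i ^ 2 * x i ^ 2 * pd2 g i x

/-- The carré du champ `Γ_L(g)(x) = Σ_i σ_i²x_i²(∂g/∂x_i(x))²`. -/
noncomputable def GammaL {n : ℕ} (σ : Fin n → ℝ) (g : (Fin n → ℝ) → ℝ)
    (x : Fin n → ℝ) : ℝ :=
  ∑ i, σ i ^ 2 * x i ^ 2 * (pd g i x) ^ 2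

lemma aux_pd {n : ℕ} (U : (Fin n → ℝ) → ℝ) (hU : ContDiff ℝ 2 U) (q : ℝ) (hq : 1 ≤ q)
    (i : Fin n) (y : Fin n → ℝ) :
    pd (fun z => U z ^ q) i y = q * U y ^ (q - 1) * pd U i y := by
  have hd : HasFDerivAt U (fderiv ℝ U y) y :=
    ((hU.differentiable (by norm_num)) y).hasFDerivAt
  have h2 := hd.rpow_const (p := q) (Or.inr hq)
  simp [pd, h2.fderiv, mul_assoc]

lemma aux_pd2 {n : ℕ} (U : (Fin n → ℝ) → ℝ) (hU : ContDiff ℝ 2 U) (q : ℝ) (hq : 1 ≤ q)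
    (i : Fin n) (x : Fin n → ℝ) (hne : U x ≠ 0) :
    pd2 (fun z => U z ^ q) i x
      = q * ((q - 1) * U x ^ (q - 2) * (pd U i x) ^ 2 + U x ^ (q - 1) * pd2 U i x) := by
  set g : (Fin n → ℝ) → ℝ := fun y => fderiv ℝ U y (Pi.single i 1) with hg
  have hgc : ContDiff ℝ 1 g :=
    ContDiff.clm_apply (hU.fderiv_right (by norm_num)) contDiff_const
  have hgd : DifferentiableAt ℝ g x := (hgc.differentiable (by norm_num)) x
  have hfun : (fun y => fderiv ℝ (fun z => U z ^ q) y (Pi.single i 1))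
      = fun y => q * U y ^ (q - 1) * g y := by
    funext y
    have := aux_pd U hU q hq i y
    simpa [pd] using this
  have hd : HasFDerivAt U (fderiv ℝ U x) x :=
    ((hU.differentiable (by norm_num)) x).hasFDerivAt
  have h1 : HasFDerivAt (fun y => U y ^ (q - 1))
      (((q - 1) * U x ^ (q - 1 - 1)) • fderiv ℝ U x) x := hd.rpow_const (Or.inl hne)
  have h2 : HasFDerivAt g (fderiv ℝ g x) x := hgd.hasFDerivAt
  have h3 := (h1.mul h2).const_mul q
  have h4 : HasFDerivAt (fun y => q * U y ^ (q - 1) * g y)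
      (q • ((U x ^ (q - 1)) • fderiv ℝ g x +
        g x • ((q - 1) * U x ^ (q - 1 - 1)) • fderiv ℝ U x)) x := by
    have hfe : (fun y => q * U y ^ (q - 1) * g y)
        = fun y => q * ((fun y => U y ^ (q - 1)) * g) y := by
      funext y; simp only [Pi.mul_apply]; ring
    rw [hfe]; exact h3
  have hkey : pd2 (fun z => U z ^ q) i x
      = (q • ((U x ^ (q - 1)) • fderiv ℝ g x +
        g x • ((q - 1) * U x ^ (q - 1 - 1)) • fderiv ℝ U x)) (Pi.single i 1) := by
    rw [pd2, hfun, h4.fderiv]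
  rw [hkey]
  have hq2 : q - 1 - 1 = q - 2 := by ring
  simp [pd, pd2, hg, hq2]
  ring

lemma aux_young (u t q : ℝ) (hu : 1 ≤ u) (ht : 0 < t) (hq : 1 < q) :
    u ^ (q - 1) ≤ u ^ q / t + t ^ (q - 1) := by
  have hu0 : (0:ℝ) < u := lt_of_lt_of_le one_pos hu
  have hq0 : 0 ≤ q - 1 := by linarith
  rcases le_total u t with h | h
  · have h1 : u ^ (q - 1) ≤ t ^ (q - 1) := Real.rpow_le_rpow hu0.le h hq0
    have h2 : 0 ≤ u ^ q / t := div_nonneg (Real.rpow_nonneg hu0.le q) ht.le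
    linarith
  · have h1 : u ^ (q - 1) = u ^ q / u := by
      rw [eq_div_iff (ne_of_gt hu0), ← Real.rpow_add_one (ne_of_gt hu0)]
      ring_nf
    have h2 : u ^ q / u ≤ u ^ q / t :=
      div_le_div_of_nonneg_left (Real.rpow_nonneg hu0.le q) ht h
    have h3 : 0 ≤ t ^ (q - 1) := Real.rpow_nonneg ht.le _
    linarith

/-- If `U ≥ 1` on `ℝ_+^n`, `LU ≤ −αU + β` and `Γ_L(U) ≤ γU²` on `ℝ_+^n`, then for every
`1 < q < q₀ := 1 + 2α/γ` there are `k_{1q}, k_{2q} > 0` with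
`L(U^q) ≤ k_{1q} − k_{2q}U^q` on `ℝ_+^n`. -/
theorem stmt12 (n : ℕ) (hn : 1 ≤ n)
    (F : Fin n → (Fin n → ℝ) → ℝ) (hF : ∀ i, Continuous (F i))
    (σ : Fin n → ℝ)
    (U : (Fin n → ℝ) → ℝ) (hU : ContDiff ℝ 2 U)
    (hU1 : ∀ x : Fin n → ℝ, (∀ i, 0 ≤ x i) → 1 ≤ U x)
    (α β γ : ℝ) (hα : 0 < α) (hβ : 0 < β) (hγ : 0 < γ)
    (hL : ∀ x : Fin n → ℝ, (∀ i, 0 ≤ x i) → Lgen F σ U x ≤ -α * U x + β)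
    (hΓ : ∀ x : Fin n → ℝ, (∀ i, 0 ≤ x i) → GammaL σ U x ≤ γ * U x ^ 2)
    (q : ℝ) (hq1 : 1 < q) (hq0 : q < 1 + 2 * α / γ) :
    ∃ k1 k2 : ℝ, 0 < k1 ∧ 0 < k2 ∧
      ∀ x : Fin n → ℝ, (∀ i, 0 ≤ x i) →
        Lgen F σ (fun y => U y ^ q) x ≤ k1 - k2 * U x ^ q := by
  set δ : ℝ := α - (q - 1) * γ / 2 with hδdef
  have hδ : 0 < δ := by
    have h1 : q - 1 < 2 * α / γ := by linarith
    have h2 : (q - 1) * γ < 2 * α := (lt_div_iff₀ hγ).mp h1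
    simp only [hδdef]; linarith
  set t : ℝ := 2 * β / δ with htdef
  have ht : 0 < t := by positivity
  refine ⟨q * β * t ^ (q - 1), q * δ / 2, ?_, ?_, ?_⟩
  · have := Real.rpow_pos_of_pos ht (q - 1)
    have hq : 0 < q := by linarith
    positivity
  · have hq : 0 < q := by linarith
    positivity
  · intro x hx
    have hu : 1 ≤ U x := hU1 x hx
    have hu0 : (0:ℝ) < U x := lt_of_lt_of_le one_pos hu
    have hne : U x ≠ 0 := ne_of_gt hu0
    have e1 : (∑ i, x i * F i x * pd (fun y => U y ^ q) i x)
        = q * U x ^ (q - 1) * ∑ i, x i * F i x * pd U i x := by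
      rw [Finset.mul_sum]
      exact Finset.sum_congr rfl fun i _ => by rw [aux_pd U hU q hq1.le]; ring
    have e2 : (∑ i, σ i ^ 2 * x i ^ 2 * pd2 (fun y => U y ^ q) i x)
        = q * (q - 1) * U x ^ (q - 2) * (∑ i, σ i ^ 2 * x i ^ 2 * (pd U i x) ^ 2)
          + q * U x ^ (q - 1) * (∑ i, σ i ^ 2 * x i ^ 2 * pd2 U i x) := by
      rw [Finset.mul_sum, Finset.mul_sum, ← Finset.sum_add_distrib]
      exact Finset.sum_congr rfl fun i _ => by rw [aux_pd2 U hU q hq1.le i x hne]; ring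
    have heq : Lgen F σ (fun y => U y ^ q) x
        = q * U x ^ (q - 1) * Lgen F σ U x
          + (q * (q - 1) / 2) * U x ^ (q - 2) * GammaL σ U x := by
      simp only [Lgen, GammaL, e1, e2]; ring
    have hu1 : (0:ℝ) < U x ^ (q - 1) := Real.rpow_pos_of_pos hu0 _
    have hu2 : (0:ℝ) < U x ^ (q - 2) := Real.rpow_pos_of_pos hu0 _
    have hq : (0:ℝ) < q := by linarith
    have h1 : q * U x ^ (q - 1) * Lgen F σ U x
        ≤ q * U x ^ (q - 1) * (-α * U x + β) :=
      mul_le_mul_of_nonneg_left (hL x hx) (by positivity)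
    have h2 : (q * (q - 1) / 2) * U x ^ (q - 2) * GammaL σ U x
        ≤ (q * (q - 1) / 2) * U x ^ (q - 2) * (γ * U x ^ 2) := by
      apply mul_le_mul_of_nonneg_left (hΓ x hx)
      have : (0:ℝ) < q - 1 := by linarith
      positivity
    have e3 : U x ^ (q - 1) * U x = U x ^ q := by
      rw [← Real.rpow_add_one hne]; ring_nf
    have e4 : U x ^ (q - 2) * U x ^ 2 = U x ^ q := by
      rw [show (U x) ^ 2 = U x ^ (2:ℝ) by
            rw [← Real.rpow_natCast (U x) 2]; norm_num,
          ← Real.rpow_add hu0]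
      ring_nf
    have h3 : q * U x ^ (q - 1) * (-α * U x + β)
        = -(q * α) * U x ^ q + q * β * U x ^ (q - 1) := by
      rw [← e3]; ring
    have h4 : (q * (q - 1) / 2) * U x ^ (q - 2) * (γ * U x ^ 2)
        = (q * (q - 1) * γ / 2) * U x ^ q := by
      rw [← e4]; ring
    have hyoung := aux_young (U x) t q hu ht hq1
    have key : q * β * U x ^ (q - 1)
        ≤ q * β * t ^ (q - 1) + (q * δ / 2) * U x ^ q := by
      have hm : q * β * U x ^ (q - 1) ≤ q * β * (U x ^ q / t + t ^ (q - 1)) :=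
        mul_le_mul_of_nonneg_left hyoung (by positivity)
      have hdiv : q * β * (U x ^ q / t) = (q * δ / 2) * U x ^ q := by
        rw [htdef]; field_simp
      calc q * β * U x ^ (q - 1) ≤ q * β * (U x ^ q / t + t ^ (q - 1)) := hm
        _ = q * β * (U x ^ q / t) + q * β * t ^ (q - 1) := by ring
        _ = q * β * t ^ (q - 1) + (q * δ / 2) * U x ^ q := by rw [hdiv]; ring
    have hfin : -(q * α) * U x ^ q + (q * δ / 2) * U x ^ q
        + (q * (q - 1) * γ / 2) * U x ^ q = -(q * δ / 2) * U x ^ q := by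
      rw [hδdef]; ring
    rw [heq]
    linarith
end
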